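/- arXiv:2103.12875 — 8 statements merged into one kernel-verified Lean document; each statement's English description precedes it below -/
import Mathlib

section
/- For any Dyck vector v = (v_1, ..., v_n) (a sequence of nonnegative integers with v_1 = 0 and v_{i+1} ≤ v_i + 1 for all i < n), the deficit defc(v) := C(n,2) - (v_1 + ... + v_n) - dinv(v) equals the number of pairs (i,j) with 1 ≤ i < j ≤ n such that either v_i - v_j ≥ 2, or there exists k < i with v_k = v_i < v_j. -/
/-- dinv contribution of an entry coming from extended negative positions. -/
def negContrib (x : ℤ) : ℕ := (if x ≤ -1 then 1 else 0) + (if x ≤ -2 then 1 else 0)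

/-- The diagonal inversion statistic of a quasi-Dyck vector, with the
convention `v_k = k - 1` for `k ≤ 0`. -/
def dinv (v : List ℤ) : ℕ :=
  (Finset.univ.filter (fun p : Fin v.length × Fin v.length =>
      (p.1 : ℕ) < (p.2 : ℕ) ∧ (v.get p.1 - v.get p.2 = 0 ∨ v.get p.1 - v.get p.2 = 1))).card
  + (v.map negContrib).sum

def area (v : List ℤ) : ℤ := v.sum

def defc (v : List ℤ) : ℤ := (v.length.choose 2 : ℤ) - area v - (dinv v : ℤ)

/-- Quasi-Dyck vector: nonempty, starts with 0, consecutive increases ≤ 1. -/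
def IsQDV (v : List ℤ) : Prop :=
  v.head? = some 0 ∧ ∀ i : ℕ, i + 1 < v.length → v.getD (i + 1) 0 ≤ v.getD i 0 + 1

def IsDyck (v : List ℤ) : Prop := IsQDV v ∧ ∀ x ∈ v, 0 ≤ x

def stepRel (v w : List ℤ) : Prop := w = 0 :: v.map (· + 1)

def dyckEquiv : List ℤ → List ℤ → Prop := Relation.EqvGen stepRel

def dyckSetoid : Setoid (List ℤ) := Relation.EqvGen.setoid stepRel

abbrev DyckClass := Quotient dyckSetoid

def cls (v : List ℤ) : DyckClass := Quotient.mk dyckSetoid v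

/-- Reduced Dyck vector: a Dyck vector that is not `0 z⁺` for a Dyck vector `z`. -/
def IsReducedDV (v : List ℤ) : Prop :=
  IsDyck v ∧ ¬ ∃ z : List ℤ, IsDyck z ∧ v = 0 :: z.map (· + 1)

/-- The leader of a QDV: the largest `d` such that `v` starts with `0,1,...,d`. -/
def leader (v : List ℤ) : ℕ :=
  Nat.findGreatest (fun d => ∀ i, i ≤ d → v.getD i 0 = (i : ℤ)) (v.length - 1)

/-- Delete the leader symbol and append `leader - 1`. -/
def nuStep (v : List ℤ) : List ℤ :=
  v.take (leader v) ++ v.drop (leader v + 1) ++ [(leader v : ℤ) - 1]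

def nuApplies (v : List ℤ) : Prop :=
  IsQDV v ∧ 2 ≤ v.length ∧ 0 ≤ v.getD 1 0 ∧ (leader v : ℤ) ≤ v.getLastD 0 + 2

/-- The map NU₁ on Dyck classes, as a relation. -/
def nuClassRel (c c' : DyckClass) : Prop :=
  ∃ v, nuApplies v ∧ c = cls v ∧ c' = cls (nuStep v)

def stepOk (A : List ℤ) : Prop := ∀ i : ℕ, i + 1 < A.length → A.getD (i + 1) 0 ≤ A.getD i 0 + 1

def okA (A : List ℤ) : Prop :=
  A = [] ∨ ((∀ x ∈ A, x ≤ 2) ∧ 0 ≤ A.getLastD 0 ∧ stepOk A)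

def okB (B : List ℤ) : Prop :=
  B = [] ∨ ((∀ x ∈ B, x ≤ 2) ∧ B.headD 0 ≤ 1 ∧ -1 ≤ B.getLastD 0 ∧ stepOk B)

/-- The map NU₂ on Dyck classes, as a relation. -/
def nu2ClassRel (c c' : DyckClass) : Prop :=
  (∃ (h : ℕ) (A : List ℤ), 2 ≤ h ∧ okA A ∧
      c = cls ([0, 1] ++ List.replicate h (2:ℤ) ++ A ++ List.replicate (h - 1) (-1)) ∧
      c' = cls (List.replicate h (0:ℤ) ++ [1] ++ A ++ List.replicate h 1)) ∨
  (∃ (k : ℕ) (B : List ℤ), 1 ≤ k ∧ okB B ∧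
      c = cls ([0, 1] ++ List.replicate k (2:ℤ) ++ B ++ List.replicate k (-1)) ∧
      c' = cls (List.replicate (k + 1) (0:ℤ) ++ B ++ [0] ++ List.replicate k 1))

/-- The extended next-up map NU = NU₁ ∪ NU₂, as a relation on Dyck classes. -/
def nuRel (c c' : DyckClass) : Prop := nuClassRel c c' ∨ nu2ClassRel c c'

/-- An integer partition, given by its weakly decreasing list of positive parts. -/
def IsPartitionList (l : List ℕ) : Prop := l.Pairwise (· ≥ ·) ∧ ∀ x ∈ l, 0 < x

/-- `phi l n` = the QDV `(0 - λ_n, 1 - λ_{n-1}, ..., (n-1) - λ_1)`. -/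
def phi (l : List ℕ) (n : ℕ) : List ℤ :=
  List.ofFn (fun i : Fin n => (i : ℤ) - (l.getD (n - 1 - (i : ℕ)) 0 : ℤ))

def nuOne (g : List ℕ) : List ℕ :=
  (g.length + 1) :: (g.map (· - 1)).filter (fun x => 0 < x)

def ndOne (g : List ℕ) : List ℕ :=
  g.tail.map (· + 1) ++ List.replicate (g.headD 0 - g.length) 1

/-- dinv of a partition: number of cells with arm - leg ∈ {0,1}. -/
def pdinv (l : List ℕ) : ℕ :=
  (Finset.univ.filter (fun c : Fin l.length × Fin (l.headD 0) =>
    (c.2 : ℕ) < l.get c.1 ∧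
      (l.get c.1 - 1 - (c.2 : ℕ) =
          (Finset.univ.filter (fun i' : Fin l.length =>
            (c.1 : ℕ) < (i' : ℕ) ∧ (c.2 : ℕ) < l.get i')).card ∨
        l.get c.1 - 1 - (c.2 : ℕ) =
          (Finset.univ.filter (fun i' : Fin l.length =>
            (c.1 : ℕ) < (i' : ℕ) ∧ (c.2 : ℕ) < l.get i')).card + 1))).card

/-- `bWord [n_1, ..., n_r]` = `0 1^{n_1} 0 1^{n_2} ⋯ 0 1^{n_r}`. -/
def bWord (ns : List ℕ) : List ℤ :=
  (ns.map (fun m => (0:ℤ) :: List.replicate m 1)).flatten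

/-- `msize [n_1, ..., n_r] = Σ i·n_i`, the size of the partition `(r^{n_r},...,1^{n_1})`. -/
def msize (ns : List ℕ) : ℕ :=
  (List.zipWith (fun m i => m * i) ns (List.range' 1 ns.length)).sum

/-- The reduced Dyck vector `0 B_μ` of the tail initiator of a partition. -/
def tiVec (l : List ℕ) : List ℤ :=
  (0:ℤ) :: ((List.range' 1 (l.headD 0)).map
    (fun i => (0:ℤ) :: List.replicate (l.count i) (1:ℤ))).flatten

/-- `c` is the second-order tail initiator of the partition `l`: obtained from
`[0 B_μ]` by iterating the extended next-down map as long as possible. -/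
def IsTI2 (l : List ℕ) (c : DyckClass) : Prop :=
  Relation.ReflTransGen (fun x y => nuRel y x) (cls (tiVec l)) c ∧ ∀ d, ¬ nuRel d c

/-- `m` is the minimum triangle height of the Dyck class `c`. -/
def mindIs (c : DyckClass) (m : ℕ) : Prop :=
  ∃ v, IsReducedDV v ∧ c = cls v ∧ v.length = m

/-- Flagpole partition: `|μ| + 8 ≤ 2 mind(TI₂(μ))`. -/
def IsFlagpole (l : List ℕ) : Prop :=
  ∃ c m, IsTI2 l c ∧ mindIs c m ∧ l.sum + 8 ≤ 2 * m

/-- The Dyck vector `v(λ,a,ε) = 0 0 1 2^{a-ε} B_λ⁺ 1^ε`. -/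
def vLam (ns : List ℕ) (a ε : ℕ) : List ℤ :=
  [0, 0, 1] ++ List.replicate (a - ε) (2:ℤ) ++ (bWord ns).map (· + 1) ++ List.replicate ε 1

-- auxiliary lemmas

lemma dyck_get_zero (v : List ℤ) (hv : IsQDV v) (h0 : 0 < v.length) :
    v.get ⟨0, h0⟩ = 0 := by
  obtain ⟨h1, -⟩ := hv
  cases v with
  | nil => simp at h0
  | cons a l => simpa using h1

lemma dyck_step (v : List ℤ) (hv : IsQDV v) (i : ℕ) (h : i + 1 < v.length) :
    v.get ⟨i + 1, h⟩ ≤ v.get ⟨i, Nat.lt_of_succ_lt h⟩ + 1 := by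
  have := hv.2 i h
  rwa [List.getD_eq_getElem _ _ h, List.getD_eq_getElem _ _ (Nat.lt_of_succ_lt h)] at this

lemma dyck_ivt (v : List ℤ) (hv : IsQDV v) :
    ∀ j : ℕ, ∀ hj : j < v.length, ∀ t : ℤ, 0 ≤ t → t ≤ v.get ⟨j, hj⟩ →
      ∃ i : ℕ, ∃ hi : i < v.length, i ≤ j ∧ v.get ⟨i, hi⟩ = t := by
  intro j
  induction j with
  | zero =>
    intro hj t h0 ht
    refine ⟨0, hj, le_refl _, ?_⟩
    rw [dyck_get_zero v hv hj] at ht ⊢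
    omega
  | succ m ih =>
    intro hj t h0 ht
    by_cases he : v.get ⟨m + 1, hj⟩ = t
    · exact ⟨m + 1, hj, le_refl _, he⟩
    · have hm : m < v.length := Nat.lt_of_succ_lt hj
      have hstep := dyck_step v hv m hj
      have ht' : t ≤ v.get ⟨m, hm⟩ := by omega
      obtain ⟨i, hi, hile, hvi⟩ := ih hm t h0 ht'
      exact ⟨i, hi, Nat.le_succ_of_le hile, hvi⟩

lemma count_first (v : List ℤ) (hv : IsDyck v) (j : Fin v.length) :
    (Finset.univ.filter fun i : Fin v.length =>
        (i : ℕ) < (j : ℕ) ∧ v.get i < v.get j ∧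
        ∀ k : Fin v.length, (k : ℕ) < (i : ℕ) → v.get k ≠ v.get i).card
      = (v.get j).toNat := by
  classical
  have hnn : ∀ i : Fin v.length, 0 ≤ v.get i := fun i => hv.2 _ (v.get_mem _)
  rw [← Finset.card_range (v.get j).toNat]
  apply Finset.card_bij (fun i _ => (v.get i).toNat)
  · intro i hi
    simp only [Finset.mem_filter, Finset.mem_univ, true_and] at hi
    simp only [Finset.mem_range]
    have := hnn i
    omega
  · intro i1 h1 i2 h2 heq
    simp only [Finset.mem_filter, Finset.mem_univ, true_and] at h1 h2
    have hveq : v.get i1 = v.get i2 := by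
      have := hnn i1; have := hnn i2; omega
    rcases Nat.lt_trichotomy (i1 : ℕ) (i2 : ℕ) with h | h | h
    · exact absurd hveq (h2.2.2 i1 h)
    · exact Fin.ext h
    · exact absurd hveq.symm (h1.2.2 i2 h)
  · intro t ht
    simp only [Finset.mem_range] at ht
    have h0 : (0 : ℤ) ≤ (t : ℤ) := Int.ofNat_nonneg t
    have htj : (t : ℤ) < v.get j := by have := hnn j; omega
    obtain ⟨i, hi, hile, hvi⟩ := dyck_ivt v hv.1 j j.isLt (t : ℤ) h0 (le_of_lt htj)
    have hex : ∃ m, ∃ hm : m < v.length, v.get ⟨m, hm⟩ = (t : ℤ) := ⟨i, hi, hvi⟩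
    set P : ℕ → Prop := fun m => ∃ hm : m < v.length, v.get ⟨m, hm⟩ = (t : ℤ) with hP
    have hexP : ∃ m, P m := hex
    obtain ⟨hm0, hv0⟩ := Nat.find_spec hexP
    have hmin : Nat.find hexP ≤ i := Nat.find_min' hexP ⟨hi, hvi⟩
    have hlt : Nat.find hexP < (j : ℕ) := by
      rcases Nat.lt_or_ge (Nat.find hexP) (j : ℕ) with h | h
      · exact h
      · have : Nat.find hexP = (j : ℕ) := le_antisymm (le_trans hmin hile) h
        exfalso
        have : v.get j = (t : ℤ) := by
          rw [← hv0]; congr 1; exact (Fin.ext this.symm)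
        omega
    refine ⟨⟨Nat.find hexP, hm0⟩, ?_, ?_⟩
    · simp only [Finset.mem_filter, Finset.mem_univ, true_and]
      refine ⟨hlt, by rw [hv0]; exact htj, ?_⟩
      intro k hk hkeq
      exact Nat.find_min hexP hk ⟨k.isLt, by simpa using hkeq.trans hv0⟩
    · simp only [List.get_eq_getElem] at hv0
      simp [hv0]


theorem stmt0 (v : List ℤ) (hv : IsDyck v) :
    defc v = ((Finset.univ.filter (fun p : Fin v.length × Fin v.length =>
        (p.1 : ℕ) < (p.2 : ℕ) ∧ (v.get p.2 + 2 ≤ v.get p.1 ∨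
          ∃ k : Fin v.length, (k : ℕ) < (p.1 : ℕ) ∧ v.get k = v.get p.1 ∧
            v.get p.1 < v.get p.2))).card : ℤ) := by
  classical
  have hnn : ∀ i : Fin v.length, 0 ≤ v.get i := fun i => hv.2 _ (v.get_mem _)
  set S : Finset (Fin v.length × Fin v.length) :=
    Finset.univ.filter (fun p : Fin v.length × Fin v.length => (p.1 : ℕ) < (p.2 : ℕ)) with hSdef
  set A : Finset (Fin v.length × Fin v.length) :=
    Finset.univ.filter (fun p : Fin v.length × Fin v.length =>
      (p.1 : ℕ) < (p.2 : ℕ) ∧ (v.get p.1 - v.get p.2 = 0 ∨ v.get p.1 - v.get p.2 = 1)) with hAdef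
  set B : Finset (Fin v.length × Fin v.length) :=
    Finset.univ.filter (fun p : Fin v.length × Fin v.length =>
      (p.1 : ℕ) < (p.2 : ℕ) ∧ (v.get p.2 + 2 ≤ v.get p.1 ∨
        ∃ k : Fin v.length, (k : ℕ) < (p.1 : ℕ) ∧ v.get k = v.get p.1 ∧
          v.get p.1 < v.get p.2)) with hBdef
  set C : Finset (Fin v.length × Fin v.length) :=
    Finset.univ.filter (fun p : Fin v.length × Fin v.length =>
      (p.1 : ℕ) < (p.2 : ℕ) ∧ v.get p.1 < v.get p.2 ∧
        ∀ k : Fin v.length, (k : ℕ) < (p.1 : ℕ) → v.get k ≠ v.get p.1) with hCdef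
  -- splitting of S
  have hsum : S.card = A.card + B.card + C.card := by
    have h1 : A = S.filter (fun p => v.get p.1 - v.get p.2 = 0 ∨ v.get p.1 - v.get p.2 = 1) := by
      ext p
      simp only [hAdef, hSdef, Finset.mem_filter, Finset.mem_univ, true_and, and_assoc]
    have h2 : S.filter (fun p => ¬ (v.get p.1 - v.get p.2 = 0 ∨ v.get p.1 - v.get p.2 = 1))
        = B ∪ C := by
      ext p
      simp only [hBdef, hCdef, hSdef, Finset.mem_filter, Finset.mem_univ, true_and,
        Finset.mem_union, not_or]
      constructor
      · rintro ⟨hlt, h0, h1⟩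
        rcases lt_trichotomy (v.get p.1) (v.get p.2) with hc | hc | hc
        · by_cases hk : ∃ k : Fin v.length, (k : ℕ) < (p.1 : ℕ) ∧ v.get k = v.get p.1 ∧
              v.get p.1 < v.get p.2
          · exact Or.inl ⟨hlt, Or.inr hk⟩
          · push_neg at hk
            refine Or.inr ⟨hlt, hc, fun k hki hke => ?_⟩
            exact absurd hc (by simpa [hke] using (hk k hki hke))
        · omega
        · exact Or.inl ⟨hlt, Or.inl (by omega)⟩
      · rintro (⟨hlt, h | ⟨k, hk, he, hab⟩⟩ | ⟨hlt, hab, hall⟩)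
        · exact ⟨hlt, by omega, by omega⟩
        · exact ⟨hlt, by omega, by omega⟩
        · exact ⟨hlt, by omega, by omega⟩
    have hdisj : Disjoint B C := by
      rw [Finset.disjoint_left]
      intro p hpB hpC
      simp only [hBdef, hCdef, Finset.mem_filter, Finset.mem_univ, true_and] at hpB hpC
      rcases hpB.2 with h | ⟨k, hk, he, hab⟩
      · omega
      · exact (hpC.2.2 k hk) he
    have := Finset.card_filter_add_card_filter_not
      (s := S) (p := fun p => v.get p.1 - v.get p.2 = 0 ∨ v.get p.1 - v.get p.2 = 1)
    rw [h2, Finset.card_union_of_disjoint hdisj, ← h1] at this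
    omega
  -- |S| = choose
  have hScard : S.card = v.length.choose 2 := by
    rw [Finset.card_eq_sum_card_fiberwise
      (f := Prod.snd) (t := (Finset.univ : Finset (Fin v.length))) (fun p _ => Finset.mem_univ _)]
    have hfib : ∀ j : Fin v.length, (S.filter fun p => p.2 = j).card = (j : ℕ) := by
      intro j
      rw [← Finset.card_range (j : ℕ)]
      apply Finset.card_bij (fun p _ => ((p.1 : Fin v.length) : ℕ))
      · intro p hp
        simp only [hSdef, Finset.mem_filter, Finset.mem_univ, true_and] at hp
        simp only [Finset.mem_range]
        rcases hp with ⟨h1, h2⟩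
        omega
      · intro p hp q hq heq
        simp only [hSdef, Finset.mem_filter, Finset.mem_univ, true_and] at hp hq
        exact Prod.ext (Fin.ext heq) (hp.2.trans hq.2.symm)
      · intro t ht
        simp only [Finset.mem_range] at ht
        refine ⟨(⟨t, lt_trans ht j.isLt⟩, j), ?_, rfl⟩
        simp only [hSdef, Finset.mem_filter, Finset.mem_univ, true_and]
        exact ⟨ht, trivial⟩
    rw [Finset.sum_congr rfl (fun j _ => hfib j)]
    rw [Fin.sum_univ_eq_sum_range (fun i => i) v.length, Finset.sum_range_id,
      Nat.choose_two_right]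
  -- dinv = |A|
  have hneg : (v.map negContrib).sum = 0 := by
    apply List.sum_eq_zero
    intro x hx
    simp only [List.mem_map] at hx
    obtain ⟨a, ha, rfl⟩ := hx
    have := hv.2 a ha
    simp only [negContrib, if_neg (by omega : ¬ a ≤ -1), if_neg (by omega : ¬ a ≤ -2)]
    rfl
  have hdinv : dinv v = A.card := by
    rw [dinv, hneg, Nat.add_zero, hAdef]
  -- area = |C|
  have hCfib : ∀ j : Fin v.length, (C.filter fun p => p.2 = j).card = (v.get j).toNat := by
    intro j
    rw [← count_first v hv j]
    apply Finset.card_bij (fun p _ => p.1)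
    · intro p hp
      simp only [hCdef, Finset.mem_filter, Finset.mem_univ, true_and] at hp ⊢
      obtain ⟨⟨h1, h2, h3⟩, h4⟩ := hp
      subst h4
      exact ⟨h1, h2, h3⟩
    · intro p hp q hq heq
      simp only [hCdef, Finset.mem_filter, Finset.mem_univ, true_and] at hp hq
      exact Prod.ext heq (hp.2.trans hq.2.symm)
    · intro i hi
      simp only [Finset.mem_filter, Finset.mem_univ, true_and] at hi
      refine ⟨(i, j), ?_, rfl⟩
      simp only [hCdef, Finset.mem_filter, Finset.mem_univ, true_and]
      exact ⟨⟨hi.1, hi.2.1, hi.2.2⟩, trivial⟩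
  have hCcard : C.card = ∑ j : Fin v.length, (v.get j).toNat := by
    rw [Finset.card_eq_sum_card_fiberwise
      (f := Prod.snd) (t := (Finset.univ : Finset (Fin v.length))) (fun p _ => Finset.mem_univ _)]
    exact Finset.sum_congr rfl (fun j _ => hCfib j)
  have harea : area v = (C.card : ℤ) := by
    have h1 : area v = ∑ j : Fin v.length, v.get j := by
      conv_lhs => rw [area, ← List.ofFn_get v]
      rw [List.sum_ofFn]
    rw [h1, hCcard]
    push_cast
    refine Finset.sum_congr rfl (fun j _ => ?_)
    have := hnn j
    omega
  -- put it together
  rw [defc, hdinv, harea, ← hScard, hsum]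
  push_cast
  ring
end

section
/- For all integers n, q ≥ 0, the Dyck vector consisting of three 0s, followed by a 1, followed by n copies of 2, followed by q copies of 1 (i.e., 0,0,0,1,2^n,1^q) has deficit equal to 2(n + q + 1). -/
/-- number of entries of `v` that form a dinv pair with a later entry `x`. -/
def cnt (v : List ℤ) (x : ℤ) : ℕ :=
  ((Finset.range v.length).filter
    (fun i => v.getD i 0 - x = 0 ∨ v.getD i 0 - x = 1)).card

/-- the pair-count part of dinv, phrased over `Finset.range`. -/
def rpc (w : List ℤ) : ℕ :=
  ((Finset.range w.length ×ˢ Finset.range w.length).filter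
    (fun p => p.1 < p.2 ∧
      (w.getD p.1 0 - w.getD p.2 0 = 0 ∨ w.getD p.1 0 - w.getD p.2 0 = 1))).card

lemma dinv_eq_rpc (w : List ℤ) :
    dinv w = rpc w + (w.map negContrib).sum := by
  unfold dinv rpc
  congr 1
  apply Finset.card_nbij (i := fun p => ((p.1 : ℕ), (p.2 : ℕ)))
  · intro p hp
    simp only [Finset.mem_coe, Finset.mem_filter, Finset.mem_univ, true_and] at hp
    simp only [Finset.mem_coe, Finset.mem_filter, Finset.mem_product, Finset.mem_range]
    refine ⟨⟨p.1.isLt, p.2.isLt⟩, hp.1, ?_⟩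
    have h1 : (w.getD (p.1 : ℕ) 0) = w.get p.1 := by
      simp [List.getD_eq_getElem?_getD, List.getElem?_eq_getElem p.1.isLt]
    have h2 : (w.getD (p.2 : ℕ) 0) = w.get p.2 := by
      simp [List.getD_eq_getElem?_getD, List.getElem?_eq_getElem p.2.isLt]
    rw [h1, h2]
    exact hp.2
  · intro p _ q _ h
    simp only [Prod.mk.injEq] at h
    exact Prod.ext (Fin.ext h.1) (Fin.ext h.2)
  · intro p hp
    simp only [Finset.mem_coe, Finset.mem_filter, Finset.mem_product, Finset.mem_range] at hp
    refine ⟨(⟨p.1, hp.1.1⟩, ⟨p.2, hp.1.2⟩), ?_, rfl⟩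
    simp only [Finset.mem_coe, Finset.mem_filter, Finset.mem_univ, true_and]
    refine ⟨hp.2.1, ?_⟩
    have h1 : w.get ⟨p.1, hp.1.1⟩ = w.getD p.1 0 := by
      simp [List.getD_eq_getElem?_getD, List.getElem?_eq_getElem hp.1.1]
    have h2 : w.get ⟨p.2, hp.1.2⟩ = w.getD p.2 0 := by
      simp [List.getD_eq_getElem?_getD, List.getElem?_eq_getElem hp.1.2]
    rw [h1, h2]
    exact hp.2.2

lemma cnt_append (w : List ℤ) (y x : ℤ) :
    cnt (w ++ [y]) x = cnt w x + (if y - x = 0 ∨ y - x = 1 then 1 else 0) := by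
  unfold cnt
  rw [List.length_append, List.length_singleton]
  rw [Finset.range_add_one, Finset.filter_insert]
  have hlast : (w ++ [y]).getD w.length 0 = y := by
    rw [List.getD_append_right _ _ _ _ (le_refl _)]
    simp
  have hcard : ((Finset.range w.length).filter
      (fun i => (w ++ [y]).getD i 0 - x = 0 ∨ (w ++ [y]).getD i 0 - x = 1)).card
      = ((Finset.range w.length).filter
          (fun i => w.getD i 0 - x = 0 ∨ w.getD i 0 - x = 1)).card := by
    congr 1
    apply Finset.filter_congr
    intro i hi
    rw [List.getD_append _ _ _ _ (Finset.mem_range.mp hi)]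
  rw [hlast]
  by_cases h : y - x = 0 ∨ y - x = 1
  · rw [if_pos h, if_pos h, Finset.card_insert_of_notMem (by simp), hcard]
    try omega
  · rw [if_neg h, if_neg h, hcard]
    try omega

lemma rpc_append (v : List ℤ) (x : ℤ) :
    rpc (v ++ [x]) = rpc v + cnt v x := by
  classical
  unfold rpc
  rw [List.length_append, List.length_singleton]
  rw [Finset.card_filter, Finset.sum_product, Finset.sum_range_succ]
  have hlast : (v ++ [x]).getD v.length 0 = x := by
    rw [List.getD_append_right _ _ _ _ (le_refl _)]
    simp
  have hget : ∀ i < v.length, (v ++ [x]).getD i 0 = v.getD i 0 := by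
    intro i hi; exact List.getD_append _ _ _ _ hi
  have hzero : (∑ b ∈ Finset.range (v.length + 1),
      if v.length < b ∧ ((v ++ [x]).getD v.length 0 - (v ++ [x]).getD b 0 = 0 ∨
        (v ++ [x]).getD v.length 0 - (v ++ [x]).getD b 0 = 1) then 1 else 0) = 0 := by
    apply Finset.sum_eq_zero
    intro b hb
    rw [if_neg]
    rintro ⟨h1, -⟩
    exact absurd (Finset.mem_range.mp hb) (by omega)
  rw [hzero, add_zero]
  have hsplit : ∀ a ∈ Finset.range v.length,
      (∑ b ∈ Finset.range (v.length + 1),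
        if a < b ∧ ((v ++ [x]).getD a 0 - (v ++ [x]).getD b 0 = 0 ∨
          (v ++ [x]).getD a 0 - (v ++ [x]).getD b 0 = 1) then 1 else 0)
      = (∑ b ∈ Finset.range v.length,
          if a < b ∧ (v.getD a 0 - v.getD b 0 = 0 ∨ v.getD a 0 - v.getD b 0 = 1)
            then 1 else 0)
        + (if v.getD a 0 - x = 0 ∨ v.getD a 0 - x = 1 then 1 else 0) := by
    intro a ha
    rw [Finset.sum_range_succ]
    congr 1
    · apply Finset.sum_congr rfl
      intro b hb
      rw [hget a (Finset.mem_range.mp ha), hget b (Finset.mem_range.mp hb)]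
    · rw [hlast, hget a (Finset.mem_range.mp ha)]
      have : a < v.length := Finset.mem_range.mp ha
      by_cases h : v.getD a 0 - x = 0 ∨ v.getD a 0 - x = 1
      · rw [if_pos ⟨this, h⟩, if_pos h]
      · rw [if_neg (fun hc => h hc.2), if_neg h]
  rw [Finset.sum_congr rfl hsplit, Finset.sum_add_distrib]
  congr 1
  · rw [Finset.card_filter, Finset.sum_product]
  · unfold cnt
    rw [Finset.card_filter]

lemma dinv_append (v : List ℤ) (x : ℤ) :
    dinv (v ++ [x]) = dinv v + cnt v x + negContrib x := by
  rw [dinv_eq_rpc, dinv_eq_rpc, rpc_append]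
  simp only [List.map_append, List.map_singleton, List.sum_append, List.sum_singleton]
  omega

lemma cnt_base2 (n : ℕ) :
    cnt ([0, 0, 0, 1] ++ List.replicate n (2:ℤ)) 2 = n := by
  induction n with
  | zero => simp; decide
  | succ m ih =>
    rw [List.replicate_succ', ← List.append_assoc, cnt_append, ih]
    norm_num

lemma cnt_base1 (n q : ℕ) :
    cnt ([0, 0, 0, 1] ++ List.replicate n (2:ℤ) ++ List.replicate q (1:ℤ)) 1
      = 1 + n + q := by
  induction q with
  | zero =>
    simp only [List.replicate_zero, List.append_nil]
    induction n with
    | zero => simp; decide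
    | succ m ih =>
      rw [List.replicate_succ', ← List.append_assoc, cnt_append, ih]
      norm_num
      omega
  | succ m ih =>
    rw [List.replicate_succ' (n := m) (a := 1), ← List.append_assoc, cnt_append, ih]
    norm_num
    omega

lemma choose_two_succ (l : ℕ) : (l + 1).choose 2 = l.choose 2 + l := by
  simp [Nat.choose_succ_succ, Nat.choose_one_right, Nat.add_comm]

theorem stmt1 (n q : ℕ) :
    defc ([0, 0, 0, 1] ++ List.replicate n (2:ℤ) ++ List.replicate q (1:ℤ))
      = 2 * ((n : ℤ) + (q : ℤ) + 1) := by
  induction q with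
  | zero =>
    simp only [List.replicate_zero, List.append_nil, Nat.cast_zero]
    induction n with
    | zero =>
      simp only [List.replicate_zero, List.append_nil, Nat.cast_zero]
      decide
    | succ m ih =>
      rw [List.replicate_succ', ← List.append_assoc]
      unfold defc at ih ⊢
      rw [dinv_append, cnt_base2]
      have hlen : (([0,0,0,1] ++ List.replicate m (2:ℤ)) ++ [2]).length
          = ([0,0,0,1] ++ List.replicate m (2:ℤ)).length + 1 := by simp
      rw [hlen, choose_two_succ]
      have harea : area (([0,0,0,1] ++ List.replicate m (2:ℤ)) ++ [2])
          = area ([0,0,0,1] ++ List.replicate m (2:ℤ)) + 2 := by simp [area]; ring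
      rw [harea]
      have hl : ([0,0,0,1] ++ List.replicate m (2:ℤ)).length = m + 4 := by simp
      rw [hl] at ih ⊢
      have hneg : negContrib 2 = 0 := by decide
      rw [hneg]
      push_cast
      push_cast at ih
      linarith
  | succ m ih =>
    rw [List.replicate_succ' (n := m) (a := (1:ℤ)), ← List.append_assoc]
    unfold defc at ih ⊢
    rw [dinv_append, cnt_base1]
    have hlen : ((([0,0,0,1] ++ List.replicate n (2:ℤ)) ++ List.replicate m (1:ℤ)) ++ [1]).length
        = (([0,0,0,1] ++ List.replicate n (2:ℤ)) ++ List.replicate m (1:ℤ)).length + 1 := by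
      simp
      try omega
    have harea : area ((([0,0,0,1] ++ List.replicate n (2:ℤ)) ++ List.replicate m (1:ℤ)) ++ [1])
        = area (([0,0,0,1] ++ List.replicate n (2:ℤ)) ++ List.replicate m (1:ℤ)) + 1 := by
      simp [area]; ring
    have hl : (([0,0,0,1] ++ List.replicate n (2:ℤ)) ++ List.replicate m (1:ℤ)).length
        = n + m + 4 := by
      simp
      try omega
    rw [hl] at ih
    rw [hlen, choose_two_succ, harea, hl]
    have hneg : negContrib 1 = 0 := by decide
    rw [hneg]
    push_cast
    push_cast at ih
    linarith
end

section
/- Let v = A B 1 2^n be a Dyck vector where n ≥ 1 and A either contains at least three 0s, or contains exactly two 0s and at least two 1s. Then defc(v) ≥ 2·len(B) + defc(A 1 2^n), where A 1 2^n denotes the Dyck vector obtained by deleting the block B from v. -/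
def pc (v : List ℤ) : ℕ :=
  ((Finset.range v.length ×ˢ Finset.range v.length).filter (fun p =>
    p.1 < p.2 ∧ (v.getD p.1 0 - v.getD p.2 0 = 0 ∨ v.getD p.1 0 - v.getD p.2 0 = 1))).card

lemma negsum_zero (v : List ℤ) (h : ∀ x ∈ v, 0 ≤ x) : (v.map negContrib).sum = 0 := by
  induction v with
  | nil => rfl
  | cons a l ih =>
    have ha := h a (by simp)
    simp only [List.map_cons, List.sum_cons, ih (fun x hx => h x (by simp [hx]))]
    simp [negContrib]
    constructor <;> omega

lemma dinv_eq_pc (v : List ℤ) (h : ∀ x ∈ v, 0 ≤ x) : dinv v = pc v := by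
  rw [dinv, negsum_zero v h, add_zero, pc]
  apply Finset.card_bij (fun p _ => ((p.1 : ℕ), (p.2 : ℕ)))
  · rintro ⟨i, j⟩ hp
    simp only [Finset.mem_filter, Finset.mem_univ, true_and] at hp
    simp only [Finset.mem_filter, Finset.mem_product, Finset.mem_range]
    refine ⟨⟨i.isLt, j.isLt⟩, hp.1, ?_⟩
    have hi : v.getD (i : ℕ) 0 = v.get i :=
      (List.getD_eq_getElem v 0 i.isLt).trans List.get_eq_getElem.symm
    have hj : v.getD (j : ℕ) 0 = v.get j :=
      (List.getD_eq_getElem v 0 j.isLt).trans List.get_eq_getElem.symm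
    rw [hi, hj]; exact hp.2
  · rintro ⟨i, j⟩ _ ⟨i', j'⟩ _ h
    simp only [Prod.mk.injEq] at h
    exact Prod.ext (Fin.ext h.1) (Fin.ext h.2)
  · rintro ⟨i, j⟩ hp
    simp only [Finset.mem_filter, Finset.mem_product, Finset.mem_range] at hp
    refine ⟨(⟨i, hp.1.1⟩, ⟨j, hp.1.2⟩), ?_, rfl⟩
    simp only [Finset.mem_filter, Finset.mem_univ, true_and]
    refine ⟨hp.2.1, ?_⟩
    have hi : v.getD i 0 = v.get ⟨i, hp.1.1⟩ :=
      (List.getD_eq_getElem v 0 hp.1.1).trans (List.get_eq_getElem (l := v) (i := ⟨i, hp.1.1⟩)).symm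
    have hj : v.getD j 0 = v.get ⟨j, hp.1.2⟩ :=
      (List.getD_eq_getElem v 0 hp.1.2).trans (List.get_eq_getElem (l := v) (i := ⟨j, hp.1.2⟩)).symm
    rw [← hi, ← hj]; exact hp.2.2

lemma count_eq_card (l : List ℤ) (c : ℤ) :
    ((Finset.range l.length).filter (fun i => l.getD i 0 = c)).card = l.count c := by
  induction l with
  | nil => simp
  | cons a t ih =>
    rw [Finset.card_filter, List.length_cons, Finset.sum_range_succ',
      List.count_cons, ← ih, Finset.card_filter]
    simp only [List.getD_cons_succ, List.getD_cons_zero]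
    congr 1
    by_cases h : a = c <;> simp [h]

lemma list_sum_eq (l : List ℤ) : l.sum = ∑ i ∈ Finset.range l.length, l.getD i 0 := by
  induction l with
  | nil => simp
  | cons a t ih =>
    rw [List.sum_cons, List.length_cons, Finset.sum_range_succ', ih]
    simp [add_comm]

lemma choose_split (m b : ℕ) : ((m + b).choose 2 : ℤ) = (m.choose 2 : ℤ) + (b.choose 2 : ℤ) + m * b := by
  induction b with
  | zero => simp
  | succ k ih =>
    have e : m + (k+1) = (m + k) + 1 := by omega
    rw [e]
    have h1 : ((m + k) + 1).choose 2 = (m + k).choose 2 + (m + k) := by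
      have := Nat.choose_succ_succ (m + k) 1
      simp [Nat.choose_one_right] at this
      omega
    have h2 : (k+1).choose 2 = k.choose 2 + k := by
      have := Nat.choose_succ_succ k 1
      simp [Nat.choose_one_right] at this
      omega
    push_cast [h1, h2, ih]
    ring

/-- intermediate values for a QDV-like list -/
lemma hits (v : List ℤ) (h0 : v.getD 0 0 = 0)
    (hstep : ∀ i : ℕ, i + 1 < v.length → v.getD (i + 1) 0 ≤ v.getD i 0 + 1) :
    ∀ p, p < v.length → ∀ y : ℤ, 0 ≤ y → y ≤ v.getD p 0 → ∃ i ≤ p, v.getD i 0 = y := by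
  intro p
  induction p with
  | zero => intro _ y hy hy2; exact ⟨0, le_refl _, by omega⟩
  | succ q ih =>
    intro hp y hy hy2
    by_cases hcase : y = v.getD (q+1) 0
    · exact ⟨q+1, le_refl _, hcase.symm⟩
    · have : y ≤ v.getD q 0 := by
        have := hstep q hp
        omega
      obtain ⟨i, hi, hiv⟩ := ih (by omega) y hy this
      exact ⟨i, by omega, hiv⟩

lemma head_getD (v : List ℤ) (h : v.head? = some 0) : v.getD 0 0 = 0 := by
  cases v with
  | nil => simp at h
  | cons a t => simp at h; simpa using h


theorem stmt2 (A B : List ℤ) (n : ℕ) (hn : 1 ≤ n)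
    (hv : IsDyck (A ++ B ++ [1] ++ List.replicate n (2:ℤ)))
    (hA' : IsDyck (A ++ [1] ++ List.replicate n (2:ℤ)))
    (hA : 3 ≤ A.count 0 ∨ (A.count 0 = 2 ∧ 2 ≤ A.count 1)) :
    2 * (B.length : ℤ) + defc (A ++ [1] ++ List.replicate n (2:ℤ))
      ≤ defc (A ++ B ++ [1] ++ List.replicate n (2:ℤ)) := by
  set v := A ++ B ++ [1] ++ List.replicate n (2:ℤ) with hvdef
  set w := A ++ [1] ++ List.replicate n (2:ℤ) with hwdef
  set a := A.length with ha
  set b := B.length with hb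
  set N := a + b + 1 + n with hN
  set M := a + 1 + n with hM
  have hlenv : v.length = N := by simp only [hvdef, List.length_append, List.length_replicate, List.length_cons, List.length_nil]; omega
  have hlenw : w.length = M := by simp only [hwdef, List.length_append, List.length_replicate, List.length_cons, List.length_nil]; omega
  -- getD evaluation facts
  have hva : ∀ i < a, v.getD i 0 = A.getD i 0 := by
    intro i hi
    rw [hvdef,
      List.getD_append _ _ _ _ (by simp only [List.length_append, List.length_cons, List.length_nil]; omega),
      List.getD_append _ _ _ _ (by simp only [List.length_append]; omega),
      List.getD_append _ _ _ _ (by omega)]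
  have hvb : ∀ t < b, v.getD (a + t) 0 = B.getD t 0 := by
    intro t ht
    rw [hvdef,
      List.getD_append _ _ _ _ (by simp only [List.length_append, List.length_cons, List.length_nil]; omega),
      List.getD_append _ _ _ _ (by simp only [List.length_append]; omega),
      List.getD_append_right _ _ _ _ (by omega)]
    have : a + t - A.length = t := by omega
    rw [this]
  have hv1 : v.getD (a + b) 0 = 1 := by
    rw [hvdef,
      List.getD_append _ _ _ _ (by simp only [List.length_append, List.length_cons, List.length_nil]; omega),
      List.getD_append_right _ _ _ _ (by simp only [List.length_append]; omega)]
    have : a + b - (A ++ B).length = 0 := by simp only [List.length_append]; omega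
    rw [this]
    rfl
  have hv2 : ∀ k, a + b < k → k < N → v.getD k 0 = 2 := by
    intro k h1 h2
    rw [hvdef,
      List.getD_append_right _ _ _ _ (by simp only [List.length_append, List.length_cons, List.length_nil]; omega)]
    rw [List.getD_eq_getElem _ _ (by simp only [List.length_append, List.length_cons, List.length_nil, List.length_replicate]; omega),
      List.getElem_replicate]
  have hwa : ∀ i < a, w.getD i 0 = A.getD i 0 := by
    intro i hi
    rw [hwdef,
      List.getD_append _ _ _ _ (by simp only [List.length_append, List.length_cons, List.length_nil]; omega),
      List.getD_append _ _ _ _ (by omega)]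
  have hw1 : w.getD a 0 = 1 := by
    rw [hwdef,
      List.getD_append _ _ _ _ (by simp only [List.length_append, List.length_cons, List.length_nil]; omega),
      List.getD_append_right _ _ _ _ (by omega)]
    have : a - A.length = 0 := by omega
    rw [this]
    rfl
  have hw2 : ∀ k, a < k → k < M → w.getD k 0 = 2 := by
    intro k h1 h2
    rw [hwdef,
      List.getD_append_right _ _ _ _ (by simp only [List.length_append, List.length_cons, List.length_nil]; omega)]
    rw [List.getD_eq_getElem _ _ (by simp only [List.length_append, List.length_cons, List.length_nil, List.length_replicate]; omega),
      List.getElem_replicate]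
  have h0 : v.getD 0 0 = 0 := head_getD v hv.1.1
  have hstep := hv.1.2
  have hnn : ∀ i, (0:ℤ) ≤ v.getD i 0 := by
    intro i
    by_cases h : i < v.length
    · rw [List.getD_eq_getElem v 0 h]; exact hv.2 _ (List.getElem_mem h)
    · rw [List.getD_eq_default]; omega
  have hcount0 : 2 ≤ A.count 0 := by rcases hA with h | h <;> omega
  -- the two pair sets
  set Pv : ℕ × ℕ → Prop := fun p =>
    p.1 < p.2 ∧ (v.getD p.1 0 - v.getD p.2 0 = 0 ∨ v.getD p.1 0 - v.getD p.2 0 = 1) with hPv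
  set Pw : ℕ × ℕ → Prop := fun p =>
    p.1 < p.2 ∧ (w.getD p.1 0 - w.getD p.2 0 = 0 ∨ w.getD p.1 0 - w.getD p.2 0 = 1) with hPw
  set Dv := (Finset.range N ×ˢ Finset.range N).filter Pv with hDv
  set Dw := (Finset.range M ×ˢ Finset.range M).filter Pw with hDw
  have hpcv : pc v = Dv.card := by rw [pc, hlenv, hDv]
  have hpcw : pc w = Dw.card := by rw [pc, hlenw, hDw]
  set inB : ℕ → Prop := fun j => a ≤ j ∧ j < a + b with hinB
  -- split
  have hsplit : (Dv.filter (fun p => inB p.1 ∨ inB p.2)).card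
      + (Dv.filter (fun p => ¬(inB p.1 ∨ inB p.2))).card = Dv.card :=
    Finset.card_filter_add_card_filter_not _
  -- outside part
  have hout : (Dv.filter (fun p => ¬(inB p.1 ∨ inB p.2))).card ≤ Dw.card := by
    set κ : ℕ → ℕ := fun j => if j < a then j else j - b with hκdef
    have hκ : ∀ j, j < N → ¬ inB j →
        (κ j < M ∧ w.getD (κ j) 0 = v.getD j 0 ∧
          ((j < a ∧ κ j = j) ∨ (a + b ≤ j ∧ κ j = j - b))) := by
      intro j hj hnb
      simp only [hinB, not_and, not_lt] at hnb
      by_cases hja : j < a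
      · have heq : κ j = j := if_pos hja
        exact ⟨by omega, by rw [heq, hwa j hja, hva j hja], Or.inl ⟨hja, heq⟩⟩
      · have hge : a + b ≤ j := hnb (by omega)
        have hκj : κ j = j - b := if_neg hja
        refine ⟨by omega, ?_, Or.inr ⟨hge, hκj⟩⟩
        rw [hκj]
        by_cases hje : j = a + b
        · have h5 : j - b = a := by omega
          rw [h5, hw1, hje, hv1]
        · rw [hw2 (j - b) (by omega) (by omega), hv2 j (by omega) (by omega)]
    apply Finset.card_le_card_of_injOn (fun p => (κ p.1, κ p.2))
    · rintro ⟨i, j⟩ hp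
      simp only [hDv, hPv, hinB, Finset.mem_coe, Finset.mem_filter, Finset.mem_product, Finset.mem_range,
        not_or, not_and, not_lt] at hp
      obtain ⟨⟨⟨hi, hj⟩, hlt, hval⟩, hnbi, hnbj⟩ := hp
      obtain ⟨hκi, hwi, hposi⟩ := hκ i hi (by simp only [hinB, not_and, not_lt]; exact hnbi)
      obtain ⟨hκj, hwj, hposj⟩ := hκ j hj (by simp only [hinB, not_and, not_lt]; exact hnbj)
      simp only [hDw, hPw, Finset.mem_coe, Finset.mem_filter, Finset.mem_product, Finset.mem_range]
      refine ⟨⟨hκi, hκj⟩, by omega, ?_⟩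
      rw [hwi, hwj]
      exact hval
    · rintro ⟨i, j⟩ hp ⟨i', j'⟩ hp' heq
      simp only [Finset.coe_filter, Set.mem_setOf_eq, hinB, not_or, not_and, not_lt] at hp hp'
      obtain ⟨hpD, hnbi, hnbj⟩ := hp
      obtain ⟨hpD', hnbi', hnbj'⟩ := hp'
      simp only [hDv, Finset.mem_filter, Finset.mem_product, Finset.mem_range] at hpD hpD'
      obtain ⟨⟨hi, hj⟩, _⟩ := hpD
      obtain ⟨⟨hi', hj'⟩, _⟩ := hpD'
      obtain ⟨-, -, hposi⟩ := hκ i hi (by simp only [hinB, not_and, not_lt]; exact hnbi)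
      obtain ⟨-, -, hposj⟩ := hκ j hj (by simp only [hinB, not_and, not_lt]; exact hnbj)
      obtain ⟨-, -, hposi'⟩ := hκ i' hi' (by simp only [hinB, not_and, not_lt]; exact hnbi')
      obtain ⟨-, -, hposj'⟩ := hκ j' hj' (by simp only [hinB, not_and, not_lt]; exact hnbj')
      simp only [Prod.mk.injEq] at heq ⊢
      omega
  -- inside part
  set Sec : ℕ → Finset (ℕ × ℕ) := fun t => Dv.filter (fun p => p.2 = a + t) with hSec
  set FT : ℕ → Finset (ℕ × ℕ) := fun t => Dv.filter (fun p => p.1 = a + t ∧ a + b ≤ p.2) with hFT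
  have hin : (Dv.filter (fun p => inB p.1 ∨ inB p.2)).card
      ≤ ∑ t ∈ Finset.range b, ((Sec t).card + (FT t).card) := by
    have hsub : Dv.filter (fun p => inB p.1 ∨ inB p.2) ⊆
        (Finset.range b).biUnion (fun t => Sec t ∪ FT t) := by
      intro p hp
      simp only [Finset.mem_filter] at hp
      obtain ⟨hpD, hcase⟩ := hp
      have hplt : p.1 < p.2 := by
        have := hpD
        simp only [hDv, hPv, Finset.mem_filter, Finset.mem_product, Finset.mem_range] at this
        exact this.2.1
      by_cases h2 : inB p.2
      · refine Finset.mem_biUnion.mpr ⟨p.2 - a, Finset.mem_range.mpr ?_, ?_⟩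
        · simp only [hinB] at h2; omega
        · apply Finset.mem_union_left
          simp only [hSec, Finset.mem_filter]
          refine ⟨hpD, ?_⟩
          simp only [hinB] at h2; omega
      · have h1 : inB p.1 := by tauto
        refine Finset.mem_biUnion.mpr ⟨p.1 - a, Finset.mem_range.mpr ?_, ?_⟩
        · simp only [hinB] at h1; omega
        · apply Finset.mem_union_right
          simp only [hFT, Finset.mem_filter]
          refine ⟨hpD, ?_, ?_⟩ <;> simp only [hinB, not_and, not_lt] at h1 h2 <;> omega
    calc (Dv.filter (fun p => inB p.1 ∨ inB p.2)).card
        ≤ ((Finset.range b).biUnion (fun t => Sec t ∪ FT t)).card := Finset.card_le_card hsub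
      _ ≤ ∑ t ∈ Finset.range b, (Sec t ∪ FT t).card := Finset.card_biUnion_le
      _ ≤ ∑ t ∈ Finset.range b, ((Sec t).card + (FT t).card) :=
          Finset.sum_le_sum (fun t _ => Finset.card_union_le _ _)
  have hper : ∀ t < b, ((Sec t).card : ℤ) + ((FT t).card : ℤ)
      ≤ (a : ℤ) + t + n - 1 - B.getD t 0 := by
    intro t ht
    set x := B.getD t 0 with hx
    have hvx : v.getD (a + t) 0 = x := hvb t ht
    have hxnn : (0:ℤ) ≤ x := hvx ▸ hnn (a + t)
    set G := (Finset.range (a + t)).filter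
      (fun i => v.getD i 0 - x = 0 ∨ v.getD i 0 - x = 1) with hG
    set E := (Finset.range (a + t)).filter (fun i => v.getD i 0 < x) with hE
    -- Sec t + E ≤ a + t
    have hSecG : (Sec t).card ≤ G.card := by
      apply Finset.card_le_card_of_injOn (fun p => p.1)
      · rintro ⟨i, j⟩ hp
        simp only [hSec, hDv, hPv, Finset.mem_coe, Finset.mem_filter, Finset.mem_product, Finset.mem_range] at hp
        obtain ⟨⟨⟨hi, hj⟩, hlt, hval⟩, he⟩ := hp
        subst he
        simp only [hG, Finset.mem_coe, Finset.mem_filter, Finset.mem_range]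
        exact ⟨hlt, by rw [← hvx]; exact hval⟩
      · rintro ⟨i, j⟩ hp ⟨i', j'⟩ hp' heq
        simp only [Finset.coe_filter, Set.mem_setOf_eq, hSec, Finset.mem_filter] at hp hp'
        simp only at heq
        exact Prod.ext heq (hp.2.trans hp'.2.symm)
    have hGE : G.card + E.card ≤ a + t := by
      have hdisj : Disjoint G E := by
        rw [Finset.disjoint_left]
        intro i hiG hiE
        simp only [hG, hE, Finset.mem_filter] at hiG hiE
        omega
      have hsub : G ∪ E ⊆ Finset.range (a + t) :=
        Finset.union_subset (Finset.filter_subset _ _) (Finset.filter_subset _ _)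
      have := Finset.card_le_card hsub
      rw [Finset.card_union_of_disjoint hdisj] at this
      simpa using this
    -- E lower bounds
    have hEx : 1 ≤ x → x.toNat ≤ E.card := by
      intro hx1
      rw [← Finset.card_range x.toNat]
      apply Finset.card_le_card_of_surjOn (fun i => (v.getD i 0).toNat)
      intro y hy
      simp only [Finset.coe_range, Set.mem_Iio] at hy
      obtain ⟨i, hile, hieq⟩ := hits v h0 hstep (a + t) (by omega) (y : ℤ)
        (by positivity) (by rw [hvx]; omega)
      have hilt : i < a + t := by
        rcases Nat.lt_or_ge i (a + t) with h | h
        · exact h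
        · exfalso
          have : i = a + t := by omega
          rw [this, hvx] at hieq
          omega
      refine ⟨i, ?_, ?_⟩
      · simp only [hE, Finset.coe_filter, Set.mem_setOf_eq, Finset.mem_range]
        exact ⟨hilt, by rw [hieq]; omega⟩
      · show (v.getD i 0).toNat = y
        rw [hieq]; simp
    have hZsub : ∀ c : ℤ, (Finset.range a).filter (fun i => A.getD i 0 = c) ⊆
        (Finset.range (a + t)).filter (fun i => v.getD i 0 = c) := by
      intro c i hi
      simp only [Finset.mem_filter, Finset.mem_range] at hi ⊢
      exact ⟨by omega, by rw [hva i hi.1]; exact hi.2⟩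
    have hZ : 1 ≤ x → A.count 0 ≤ E.card := by
      intro hx1
      rw [← count_eq_card, ← ha]
      apply Finset.card_le_card
      refine (hZsub 0).trans ?_
      intro i hi
      simp only [hE, Finset.mem_filter] at hi ⊢
      exact ⟨hi.1, by omega⟩
    have h4 : 2 ≤ x → 4 ≤ E.card := by
      intro hx2
      set Z := (Finset.range (a + t)).filter (fun i => v.getD i 0 = 0) with hZdef
      set O := (Finset.range (a + t)).filter (fun i => v.getD i 0 = 1) with hOdef
      have hZA : A.count 0 ≤ Z.card := by
        rw [← count_eq_card, ← ha]
        exact Finset.card_le_card (hZsub 0)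
      have hOA : A.count 1 ≤ O.card := by
        rw [← count_eq_card, ← ha]
        exact Finset.card_le_card (hZsub 1)
      have hO1 : 1 ≤ O.card := by
        obtain ⟨i, hile, hieq⟩ := hits v h0 hstep (a + t) (by omega) 1 (by omega)
          (by rw [hvx]; omega)
        have hilt : i < a + t := by
          rcases Nat.lt_or_ge i (a + t) with h | h
          · exact h
          · exfalso
            have : i = a + t := by omega
            rw [this, hvx] at hieq
            omega
        have : i ∈ O := by
          simp only [hOdef, Finset.mem_filter, Finset.mem_range]
          exact ⟨hilt, hieq⟩
        exact Finset.card_pos.mpr ⟨i, this⟩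
      have hdisj : Disjoint Z O := by
        rw [Finset.disjoint_left]
        intro i hiZ hiO
        simp only [hZdef, hOdef, Finset.mem_filter] at hiZ hiO
        omega
      have hsub : Z ∪ O ⊆ E := by
        intro i hi
        rcases Finset.mem_union.mp hi with h | h <;>
          simp only [hZdef, hOdef, hE, Finset.mem_filter] at h ⊢ <;>
          exact ⟨h.1, by omega⟩
      have hcard : Z.card + O.card ≤ E.card := by
        rw [← Finset.card_union_of_disjoint hdisj]
        exact Finset.card_le_card hsub
      rcases hA with h | h <;> omega
    -- FT bounds
    have hFTle : ∀ S' : Finset ℕ,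
        (∀ k, a + b ≤ k → k < N → (x - v.getD k 0 = 0 ∨ x - v.getD k 0 = 1) → k ∈ S') →
        (FT t).card ≤ S'.card := by
      intro S' hS'
      apply Finset.card_le_card_of_injOn (fun p => p.2)
      · rintro ⟨i, j⟩ hp
        simp only [hFT, hDv, hPv, Finset.mem_coe, Finset.mem_filter, Finset.mem_product, Finset.mem_range] at hp
        obtain ⟨⟨⟨hi, hj⟩, hlt, hval⟩, he1, he2⟩ := hp
        subst he1
        exact hS' j he2 hj (by rw [← hvx]; exact hval)
      · rintro ⟨i, j⟩ hp ⟨i', j'⟩ hp' heq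
        simp only [Finset.coe_filter, Set.mem_setOf_eq, hFT, Finset.mem_filter] at hp hp'
        simp only at heq
        exact Prod.ext (hp.2.1.trans hp'.2.1.symm) heq
    -- case analysis on x
    by_cases hx1 : x = 1
    · have hFT1 : (FT t).card ≤ 1 := by
        have := hFTle {a + b} (by
          intro k hk1 hk2 hcond
          simp only [Finset.mem_singleton]
          by_contra hne
          rw [hv2 k (by omega) hk2] at hcond
          omega)
        simpa using this
      have := hZ (by omega)
      omega
    · by_cases hx2 : x = 2
      · have hFT2 : (FT t).card ≤ n + 1 := by
          have := hFTle (Finset.Ico (a + b) N) (by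
            intro k hk1 hk2 _
            exact Finset.mem_Ico.mpr ⟨hk1, hk2⟩)
          rw [Nat.card_Ico] at this
          omega
        have := h4 (by omega)
        omega
      · by_cases hx3 : x = 3
        · have hFT3 : (FT t).card ≤ n := by
            have := hFTle (Finset.Ico (a + b + 1) N) (by
              intro k hk1 hk2 hcond
              refine Finset.mem_Ico.mpr ⟨?_, hk2⟩
              by_contra hne
              have hke : k = a + b := by omega
              rw [hke, hv1] at hcond
              omega)
            rw [Nat.card_Ico] at this
            omega
          have := h4 (by omega)
          omega
        · have hFT0 : (FT t).card = 0 := by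
            have := hFTle ∅ (by
              intro k hk1 hk2 hcond
              exfalso
              by_cases hke : k = a + b
              · rw [hke, hv1] at hcond; omega
              · rw [hv2 k (by omega) hk2] at hcond; omega)
            simpa using this
          by_cases hx0 : x = 0
          · omega
          · have := hEx (by omega)
            omega
  -- assemble
  have hsum : ((∑ t ∈ Finset.range b, ((Sec t).card + (FT t).card) : ℕ) : ℤ)
      ≤ b * ((a : ℤ) + n - 1) + (b.choose 2 : ℤ) - B.sum := by
    push_cast
    calc ∑ t ∈ Finset.range b, (((Sec t).card : ℤ) + ((FT t).card : ℤ))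
        ≤ ∑ t ∈ Finset.range b, ((a : ℤ) + t + n - 1 - B.getD t 0) := by
          apply Finset.sum_le_sum
          intro t ht
          exact hper t (Finset.mem_range.mp ht)
      _ = b * ((a : ℤ) + n - 1) + (b.choose 2 : ℤ) - B.sum := by
          rw [list_sum_eq B]
          rw [Nat.choose_two_right, ← Finset.sum_range_id]
          push_cast
          rw [Finset.sum_sub_distrib]
          congr 1
          have : ∀ t ∈ Finset.range b, (a : ℤ) + t + n - 1 = ((a:ℤ) + n - 1) + t := by
            intro t _; ring
          rw [Finset.sum_congr rfl this, Finset.sum_add_distrib, Finset.sum_const,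
            Finset.card_range, nsmul_eq_mul]
      _ = _ := by rw [hb]
  have hpc_le : (pc v : ℤ) ≤ (pc w : ℤ) + b * ((a : ℤ) + n - 1) + (b.choose 2 : ℤ) - B.sum := by
    rw [hpcv, hpcw]
    have h1 : Dv.card ≤ Dw.card + ∑ t ∈ Finset.range b, ((Sec t).card + (FT t).card) := by
      omega
    have h1' : (Dv.card : ℤ) ≤ (Dw.card : ℤ)
        + ((∑ t ∈ Finset.range b, ((Sec t).card + (FT t).card) : ℕ) : ℤ) := by
      exact_mod_cast h1
    linarith
  -- final arithmetic
  have hdv : dinv v = pc v := dinv_eq_pc v hv.2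
  have hdw : dinv w = pc w := dinv_eq_pc w hA'.2
  have hsumv : v.sum = A.sum + B.sum + 1 + 2 * n := by
    simp [hvdef, List.sum_append, List.sum_replicate]; ring
  have hsumw : w.sum = A.sum + 1 + 2 * n := by
    simp [hwdef, List.sum_append, List.sum_replicate]; ring
  have hchoose : (N.choose 2 : ℤ) = (M.choose 2 : ℤ) + (b.choose 2 : ℤ) + M * b := by
    have : N = M + b := by omega
    rw [this, choose_split]
  rw [defc, defc, area, area, hdv, hdw, hlenv, hlenw, hsumv, hsumw]
  push_cast [hchoose] at *
  push_cast [hM]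
  linarith
end

section
/- Let v = 0 0 A 0 B 1 2^n 1^q be a Dyck vector where n ≥ 1, q ≥ 0, and A, B are (possibly empty) lists. Then defc(v) ≥ 2·len(A) + 2·len(B) + 2(n+q) + 1. -/
namespace Stmt3Aux
open Finset

lemma finpair (L : ℕ) (f : ℕ → ℕ → Bool) :
    (univ.filter (fun p : Fin L × Fin L => (p.1 : ℕ) < (p.2 : ℕ) ∧ f p.1 p.2)).card
      = ∑ j ∈ range L, ((range j).filter (fun i => f i j)).card := by
  rw [Finset.card_eq_sum_card_fiberwise (f := fun p : Fin L × Fin L => (p.2 : ℕ))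
    (t := range L) (fun p _ => mem_range.2 p.2.2)]
  refine Finset.sum_congr rfl (fun j hj => ?_)
  rw [Finset.filter_filter]
  apply Finset.card_bij (fun p _ => (p.1 : ℕ))
  · rintro ⟨p1, p2⟩ hp
    simp only [mem_filter, mem_univ, true_and] at hp
    simp only [mem_filter, mem_range]
    exact ⟨hp.2 ▸ hp.1.1, hp.2 ▸ hp.1.2⟩
  · rintro ⟨p1, p2⟩ hp ⟨q1, q2⟩ hq h
    simp only [mem_filter, mem_univ, true_and] at hp hq
    simp only at h
    ext
    · exact h
    · simp [hp.2, hq.2]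
  · intro i hi
    simp only [mem_filter, mem_range] at hi
    have hjL : j < L := mem_range.1 hj
    refine ⟨(⟨i, lt_trans hi.1 hjL⟩, ⟨j, hjL⟩), ?_, rfl⟩
    simp [hi.1, hi.2]

lemma bridge (v : List ℤ) (h0 : ∀ x ∈ v, 0 ≤ x) :
    defc v = (∑ j ∈ range v.length,
        (((range j).filter (fun i =>
          ¬(v.getD i 0 - v.getD j 0 = 0 ∨ v.getD i 0 - v.getD j 0 = 1))).card : ℤ))
      - area v := by
  have hneg : (v.map negContrib).sum = 0 := by
    apply List.sum_eq_zero
    intro x hx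
    simp only [List.mem_map] at hx
    obtain ⟨y, hy, rfl⟩ := hx
    have := h0 y hy
    simp only [negContrib]
    rw [if_neg (by omega), if_neg (by omega)]
    rfl
  set f : ℕ → ℕ → Bool := fun i j =>
    decide (v.getD i 0 - v.getD j 0 = 0 ∨ v.getD i 0 - v.getD j 0 = 1) with hf
  have hgood : dinv v = ∑ j ∈ range v.length, ((range j).filter (fun i => f i j)).card := by
    rw [dinv, hneg, ← finpair v.length f]
    rw [add_zero]
    congr 1
    apply Finset.filter_congr
    rintro ⟨p1, p2⟩ _
    simp only [hf, decide_eq_true_eq, List.getD_eq_getElem _ _ p1.2,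
      List.getD_eq_getElem _ _ p2.2, List.get_eq_getElem]
  have hsplit : ∀ j ∈ range v.length,
      ((range j).filter (fun i => f i j)).card
        + ((range j).filter (fun i =>
            ¬(v.getD i 0 - v.getD j 0 = 0 ∨ v.getD i 0 - v.getD j 0 = 1))).card = j := by
    intro j _
    have e2 : ((range j).filter (fun i =>
        ¬(v.getD i 0 - v.getD j 0 = 0 ∨ v.getD i 0 - v.getD j 0 = 1)))
        = (range j).filter (fun i => ¬(f i j : Prop)) := by
      apply Finset.filter_congr
      intro i _
      simp [hf]
    rw [e2, Finset.card_filter_add_card_filter_not, card_range]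
  have hchoose : (∑ j ∈ range v.length, ((range j).filter (fun i => f i j)).card)
      + (∑ j ∈ range v.length, ((range j).filter (fun i =>
          ¬(v.getD i 0 - v.getD j 0 = 0 ∨ v.getD i 0 - v.getD j 0 = 1))).card)
      = v.length.choose 2 := by
    rw [← Finset.sum_add_distrib, Finset.sum_congr rfl hsplit, Finset.sum_range_id,
      Nat.choose_two_right]
  rw [defc, hgood]
  have : ((v.length.choose 2 : ℕ) : ℤ)
      = (∑ j ∈ range v.length, (((range j).filter (fun i => f i j)).card : ℤ))
        + ∑ j ∈ range v.length, (((range j).filter (fun i =>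
            ¬(v.getD i 0 - v.getD j 0 = 0 ∨ v.getD i 0 - v.getD j 0 = 1))).card : ℤ) := by
    rw [← Nat.cast_sum, ← Nat.cast_sum, ← Nat.cast_add, hchoose]
  rw [this]
  push_cast
  ring




lemma reach (v : List ℤ) (h0 : v.getD 0 0 = 0)
    (hstep : ∀ i : ℕ, i + 1 < v.length → v.getD (i + 1) 0 ≤ v.getD i 0 + 1) :
    ∀ j, j < v.length → ∀ m : ℤ, 0 ≤ m → m ≤ v.getD j 0 → ∃ i, i ≤ j ∧ v.getD i 0 = m := by
  intro j
  induction j with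
  | zero => intro _ m h1 h2; exact ⟨0, le_refl _, by omega⟩
  | succ j ih =>
    intro hj m h1 h2
    by_cases h : m ≤ v.getD j 0
    · obtain ⟨i, hi, he⟩ := ih (by omega) m h1 h
      exact ⟨i, by omega, he⟩
    · exact ⟨j + 1, le_refl _, by have := hstep j hj; omega⟩

lemma card_vals (v : List ℤ) (h0 : v.getD 0 0 = 0) (h1 : v.getD 1 0 = 0)
    (hstep : ∀ i : ℕ, i + 1 < v.length → v.getD (i + 1) 0 ≤ v.getD i 0 + 1)
    (j : ℕ) (hj : j < v.length) (h2j : 2 ≤ j) (x : ℤ) (hx : x ≤ v.getD (j - 1) 0 + 1) :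
    x - 1 ≤ (((Ico 2 j).filter (fun i => 1 ≤ v.getD i 0 ∧ v.getD i 0 < x)).card : ℤ) := by
  classical
  by_cases hx1 : x ≤ 1
  · have : (0:ℤ) ≤ (((Ico 2 j).filter (fun i => 1 ≤ v.getD i 0 ∧ v.getD i 0 < x)).card : ℤ) :=
      Nat.cast_nonneg _
    omega
  push_neg at hx1
  have hj1 : j - 1 < v.length := by omega
  set T := (Ico 2 j).filter (fun i => 1 ≤ v.getD i 0 ∧ v.getD i 0 < x) with hT
  have key : (Icc (1:ℤ) (x - 1)).card ≤ T.card := by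
    set g : ℤ → ℕ := fun m =>
      if h : 0 ≤ m ∧ m ≤ v.getD (j - 1) 0 then (reach v h0 hstep (j - 1) hj1 m h.1 h.2).choose
      else 0 with hg
    apply Finset.card_le_card_of_injOn g
    · intro m hm
      simp only [Finset.mem_coe, mem_Icc] at hm
      have hcond : 0 ≤ m ∧ m ≤ v.getD (j - 1) 0 := ⟨by omega, by omega⟩
      have hspec := (reach v h0 hstep (j - 1) hj1 m hcond.1 hcond.2).choose_spec
      rw [hg]
      simp only [dif_pos hcond]
      set i := (reach v h0 hstep (j - 1) hj1 m hcond.1 hcond.2).choose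
      simp only [Finset.mem_coe, hT, mem_filter, mem_Ico]
      have hi2 : 2 ≤ i := by
        rcases Nat.lt_or_ge i 2 with h | h
        · interval_cases i <;> omega
        · exact h
      exact ⟨⟨hi2, by omega⟩, by omega, by omega⟩
    · intro m1 hm1 m2 hm2 he
      simp only [coe_Icc, Set.mem_Icc] at hm1 hm2
      have c1 : 0 ≤ m1 ∧ m1 ≤ v.getD (j - 1) 0 := ⟨by omega, by omega⟩
      have c2 : 0 ≤ m2 ∧ m2 ≤ v.getD (j - 1) 0 := ⟨by omega, by omega⟩
      have s1 := (reach v h0 hstep (j - 1) hj1 m1 c1.1 c1.2).choose_spec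
      have s2 := (reach v h0 hstep (j - 1) hj1 m2 c2.1 c2.2).choose_spec
      rw [hg] at he
      simp only [dif_pos c1, dif_pos c2] at he
      rw [← s1.2, ← s2.2, he]
  rw [Int.card_Icc] at key
  have : ((x - 1 + 1 - 1).toNat : ℤ) = x - 1 := by omega
  omega

lemma sum_getD (l : List ℤ) (g : ℤ → ℤ) :
    ∑ t ∈ range l.length, g (l.getD t 0) = (l.map g).sum := by
  induction l with
  | nil => simp
  | cons x t ih =>
    rw [List.length_cons, Finset.sum_range_succ']
    simp only [List.getD_cons_succ, List.getD_cons_zero, ih, List.map_cons, List.sum_cons]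
    ring

lemma regsum (w : ℕ → ℤ) (s : ℕ) (l : List ℤ)
    (h : ∀ t, t < l.length → w (s + t) = l.getD t 0) (g : ℤ → ℤ) :
    ∑ i ∈ Ico s (s + l.length), g (w i) = (l.map g).sum := by
  rw [Finset.sum_Ico_eq_sum_range]
  simp only [Nat.add_sub_cancel_left]
  rw [← sum_getD l g]
  exact Finset.sum_congr rfl (fun t ht => by rw [h t (mem_range.1 ht)])

lemma final_A (l : List ℤ) (h : ∀ x ∈ l, 0 ≤ x) :
    2 * (l.length : ℤ) + l.sum ≤
      (l.map (fun x => x + if 1 ≤ x then 1 else 0)).sum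
      + (l.map (fun x => if ¬(x = 0 ∨ x = 1) then (1:ℤ) else 0)).sum
      + (l.map (fun x => if ¬(x = 1 ∨ x = 2) then (1:ℤ) else 0)).sum
      + (l.map (fun x => if ¬(x = 2 ∨ x = 3) then (1:ℤ) else 0)).sum := by
  induction l with
  | nil => simp
  | cons x t ih =>
    have hx := h x (List.mem_cons_self)
    have iht := ih (fun y hy => h y (List.mem_cons_of_mem x hy))
    simp only [List.map_cons, List.sum_cons, List.length_cons]
    push_cast
    have hper : (2:ℤ) + x ≤ (x + if 1 ≤ x then 1 else 0)
        + (if ¬(x = 0 ∨ x = 1) then (1:ℤ) else 0)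
        + (if ¬(x = 1 ∨ x = 2) then (1:ℤ) else 0)
        + (if ¬(x = 2 ∨ x = 3) then (1:ℤ) else 0) := by
      split_ifs <;> omega
    linarith

lemma final_B (l : List ℤ) (h : ∀ x ∈ l, 0 ≤ x) :
    2 * (l.length : ℤ) + l.sum ≤
      (l.map (fun x => x + if 1 ≤ x then 2 else 0)).sum
      + (l.map (fun x => if ¬(x = 1 ∨ x = 2) then (1:ℤ) else 0)).sum
      + (l.map (fun x => if ¬(x = 2 ∨ x = 3) then (1:ℤ) else 0)).sum := by
  induction l with
  | nil => simp
  | cons x t ih =>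
    have hx := h x (List.mem_cons_self)
    have iht := ih (fun y hy => h y (List.mem_cons_of_mem x hy))
    simp only [List.map_cons, List.sum_cons, List.length_cons]
    push_cast
    have hper : (2:ℤ) + x ≤ (x + if 1 ≤ x then 2 else 0)
        + (if ¬(x = 1 ∨ x = 2) then (1:ℤ) else 0)
        + (if ¬(x = 2 ∨ x = 3) then (1:ℤ) else 0) := by
      split_ifs <;> omega
    linarith

lemma mapsum_nonneg (l : List ℤ) (g : ℤ → ℤ) (hg : ∀ x, 0 ≤ g x) : 0 ≤ (l.map g).sum := by
  apply List.sum_nonneg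
  intro x hx
  simp only [List.mem_map] at hx
  obtain ⟨y, _, rfl⟩ := hx
  exact hg y


lemma getD_shift (u : List ℤ) (l : List ℤ) (k : ℕ) :
    (u ++ l).getD (u.length + k) 0 = l.getD k 0 := by
  rw [List.getD_append_right _ _ _ _ (Nat.le_add_right _ _), Nat.add_sub_cancel_left]

end Stmt3Aux


set_option maxHeartbeats 1000000 in
theorem stmt3 (A B : List ℤ) (n q : ℕ) (hn : 1 ≤ n)
    (hv : IsDyck ([0, 0] ++ A ++ [0] ++ B ++ [1]
        ++ List.replicate n (2:ℤ) ++ List.replicate q (1:ℤ))) :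
    2 * (A.length : ℤ) + 2 * (B.length : ℤ) + 2 * ((n : ℤ) + (q : ℤ)) + 1
      ≤ defc ([0, 0] ++ A ++ [0] ++ B ++ [1]
          ++ List.replicate n (2:ℤ) ++ List.replicate q (1:ℤ)) := by
  classical
  set v : List ℤ := [0, 0] ++ A ++ [0] ++ B ++ [1]
      ++ List.replicate n (2:ℤ) ++ List.replicate q (1:ℤ) with hvdef
  obtain ⟨⟨hhead, hstep⟩, hpos⟩ := hv
  have hv' : v = 0 :: 0 :: (A ++ 0 :: (B ++ 1 ::
      (List.replicate n (2:ℤ) ++ List.replicate q (1:ℤ)))) := by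
    rw [hvdef]; simp [List.append_assoc]
  have hlen : v.length = A.length + B.length + n + q + 4 := by
    rw [hv']; simp [List.length_append]; omega
  have hw0 : v.getD 0 0 = 0 := by rw [hv']; rfl
  have hw1 : v.getD 1 0 = 0 := by rw [hv']; rfl
  have hwA : ∀ t, t < A.length → v.getD (2 + t) 0 = A.getD t 0 := by
    intro t ht
    rw [hv', show 2 + t = t + 1 + 1 by omega, List.getD_cons_succ, List.getD_cons_succ,
      List.getD_append _ _ _ _ ht]
  have hwMid : v.getD (2 + A.length) 0 = 0 := by
    rw [hv', show 2 + A.length = A.length + 1 + 1 by omega, List.getD_cons_succ,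
      List.getD_cons_succ, List.getD_append_right _ _ _ _ (le_refl A.length)]
    simp
  have hwB : ∀ t, t < B.length → v.getD (3 + A.length + t) 0 = B.getD t 0 := by
    intro t ht
    rw [hv', show 3 + A.length + t = A.length + (t + 1) + 1 + 1 by omega,
      List.getD_cons_succ, List.getD_cons_succ, Stmt3Aux.getD_shift,
      List.getD_cons_succ, List.getD_append _ _ _ _ ht]
  have hwOne : v.getD (3 + A.length + B.length) 0 = 1 := by
    rw [hv', show 3 + A.length + B.length = A.length + (B.length + 1) + 1 + 1 by omega,
      List.getD_cons_succ, List.getD_cons_succ, Stmt3Aux.getD_shift, List.getD_cons_succ,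
      List.getD_append_right _ _ _ _ (le_refl B.length)]
    simp
  have hw2 : ∀ t, t < n → v.getD (4 + A.length + B.length + t) 0 = 2 := by
    intro t ht
    rw [hv', show 4 + A.length + B.length + t
        = A.length + (B.length + (t + 1) + 1) + 1 + 1 by omega,
      List.getD_cons_succ, List.getD_cons_succ, Stmt3Aux.getD_shift, List.getD_cons_succ,
      Stmt3Aux.getD_shift, List.getD_cons_succ,
      List.getD_append _ _ _ _ (by simpa using ht),
      List.getD_eq_getElem _ _ (by simpa using ht)]
    simp
  have hw1q : ∀ t, t < q → v.getD (4 + A.length + B.length + n + t) 0 = 1 := by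
    intro t ht
    rw [hv', show 4 + A.length + B.length + n + t
        = A.length + (B.length + (n + t + 1) + 1) + 1 + 1 by omega,
      List.getD_cons_succ, List.getD_cons_succ, Stmt3Aux.getD_shift, List.getD_cons_succ,
      Stmt3Aux.getD_shift, List.getD_cons_succ,
      List.getD_append_right _ _ _ _ (by simp),
      List.getD_eq_getElem _ _ (by simpa using ht)]
    simp

  -- nonnegativity of entries of A and B
  have hposA : ∀ x ∈ A, 0 ≤ x := by
    intro x hx; apply hpos; rw [hv']; simp [hx]
  have hposB : ∀ x ∈ B, 0 ≤ x := by
    intro x hx; apply hpos; rw [hv']; simp [hx]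
  have hmem : ∀ j, j < v.length → v.getD j 0 ∈ v := by
    intro j hj
    rw [List.getD_eq_getElem _ _ hj]
    exact List.getElem_mem _
  -- per-position lower bounds
  have bndA : ∀ j ∈ Finset.Ico 2 (2 + A.length),
      v.getD j 0 + (if 1 ≤ v.getD j 0 then (1:ℤ) else 0)
        ≤ (((Finset.range j).filter (fun i =>
            ¬(v.getD i 0 - v.getD j 0 = 0 ∨ v.getD i 0 - v.getD j 0 = 1))).card : ℤ) := by
    intro j hj
    rw [Finset.mem_Ico] at hj
    have hjL : j < v.length := by omega
    have hx0 : 0 ≤ v.getD j 0 := hpos _ (hmem j hjL)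
    by_cases h1 : 1 ≤ v.getD j 0
    · have hxstep : v.getD j 0 ≤ v.getD (j - 1) 0 + 1 := by
        have := hstep (j - 1) (by omega)
        rwa [show j - 1 + 1 = j by omega] at this
      have hT := Stmt3Aux.card_vals v hw0 hw1 hstep j hjL (by omega) (v.getD j 0) hxstep
      set T := (Finset.Ico 2 j).filter
        (fun i => 1 ≤ v.getD i 0 ∧ v.getD i 0 < v.getD j 0) with hTdef
      have h1T : (1:ℕ) ∉ T := by simp [hTdef]
      have h0T : (0:ℕ) ∉ insert 1 T := by simp [hTdef]
      have hsub : insert 0 (insert 1 T) ⊆ (Finset.range j).filter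
          (fun i => ¬(v.getD i 0 - v.getD j 0 = 0 ∨ v.getD i 0 - v.getD j 0 = 1)) := by
        intro i hi
        simp only [Finset.mem_insert, hTdef, Finset.mem_filter, Finset.mem_Ico] at hi
        simp only [Finset.mem_filter, Finset.mem_range]
        rcases hi with rfl | rfl | ⟨⟨h2i, hij⟩, hge, hlt⟩
        · exact ⟨by omega, by rw [hw0]; omega⟩
        · exact ⟨by omega, by rw [hw1]; omega⟩
        · exact ⟨hij, by omega⟩
      have hcard := Finset.card_le_card hsub
      rw [Finset.card_insert_of_notMem h0T, Finset.card_insert_of_notMem h1T] at hcard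
      rw [if_pos h1]
      omega
    · rw [if_neg h1]
      omega
  have bndB : ∀ j ∈ Finset.Ico (3 + A.length) (3 + A.length + B.length),
      v.getD j 0 + (if 1 ≤ v.getD j 0 then (2:ℤ) else 0)
        ≤ (((Finset.range j).filter (fun i =>
            ¬(v.getD i 0 - v.getD j 0 = 0 ∨ v.getD i 0 - v.getD j 0 = 1))).card : ℤ) := by
    intro j hj
    rw [Finset.mem_Ico] at hj
    have hjL : j < v.length := by omega
    have hx0 : 0 ≤ v.getD j 0 := hpos _ (hmem j hjL)
    by_cases h1 : 1 ≤ v.getD j 0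
    · have hxstep : v.getD j 0 ≤ v.getD (j - 1) 0 + 1 := by
        have := hstep (j - 1) (by omega)
        rwa [show j - 1 + 1 = j by omega] at this
      have hT := Stmt3Aux.card_vals v hw0 hw1 hstep j hjL (by omega) (v.getD j 0) hxstep
      set T := (Finset.Ico 2 j).filter
        (fun i => 1 ≤ v.getD i 0 ∧ v.getD i 0 < v.getD j 0) with hTdef
      have hmT : (2 + A.length) ∉ T := by
        simp only [hTdef, Finset.mem_filter, Finset.mem_Ico, hwMid]
        omega
      have h1T : (1:ℕ) ∉ insert (2 + A.length) T := by
        simp only [Finset.mem_insert, hTdef, Finset.mem_filter, Finset.mem_Ico]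
        omega
      have h0T : (0:ℕ) ∉ insert 1 (insert (2 + A.length) T) := by
        simp only [Finset.mem_insert, hTdef, Finset.mem_filter, Finset.mem_Ico]
        omega
      have hsub : insert 0 (insert 1 (insert (2 + A.length) T)) ⊆ (Finset.range j).filter
          (fun i => ¬(v.getD i 0 - v.getD j 0 = 0 ∨ v.getD i 0 - v.getD j 0 = 1)) := by
        intro i hi
        simp only [Finset.mem_insert, hTdef, Finset.mem_filter, Finset.mem_Ico] at hi
        simp only [Finset.mem_filter, Finset.mem_range]
        rcases hi with rfl | rfl | rfl | ⟨⟨h2i, hij⟩, hge, hlt⟩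
        · exact ⟨by omega, by rw [hw0]; omega⟩
        · exact ⟨by omega, by rw [hw1]; omega⟩
        · exact ⟨by omega, by rw [hwMid]; omega⟩
        · exact ⟨hij, by omega⟩
      have hcard := Finset.card_le_card hsub
      rw [Finset.card_insert_of_notMem h0T, Finset.card_insert_of_notMem h1T,
        Finset.card_insert_of_notMem hmT] at hcard
      rw [if_pos h1]
      omega
    · rw [if_neg h1]
      omega
  have bndMid : (A.map (fun x => if ¬(x = 0 ∨ x = 1) then (1:ℤ) else 0)).sum
      ≤ (((Finset.range (2 + A.length)).filter (fun i =>
          ¬(v.getD i 0 - v.getD (2 + A.length) 0 = 0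
            ∨ v.getD i 0 - v.getD (2 + A.length) 0 = 1))).card : ℤ) := by
    have e1 : ∑ i ∈ Finset.Ico 2 (2 + A.length),
        (if ¬(v.getD i 0 = 0 ∨ v.getD i 0 = 1) then (1:ℤ) else 0)
        = (A.map (fun x => if ¬(x = 0 ∨ x = 1) then (1:ℤ) else 0)).sum :=
      Stmt3Aux.regsum (fun i => v.getD i 0) 2 A hwA (fun x => if ¬(x = 0 ∨ x = 1) then (1:ℤ) else 0)
    rw [← e1, Finset.sum_boole]
    have hsub : (Finset.Ico 2 (2 + A.length)).filter
        (fun i => ¬(v.getD i 0 = 0 ∨ v.getD i 0 = 1))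
        ⊆ (Finset.range (2 + A.length)).filter (fun i =>
          ¬(v.getD i 0 - v.getD (2 + A.length) 0 = 0
            ∨ v.getD i 0 - v.getD (2 + A.length) 0 = 1)) := by
      intro i hi
      simp only [Finset.mem_filter, Finset.mem_Ico] at hi
      simp only [Finset.mem_filter, Finset.mem_range, hwMid]
      exact ⟨by omega, by omega⟩
    exact_mod_cast Finset.card_le_card hsub
  have bndOne : ∀ j, 3 + A.length + B.length ≤ j → v.getD j 0 = 1 →
      3 + (A.map (fun x => if ¬(x = 1 ∨ x = 2) then (1:ℤ) else 0)).sum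
        + (B.map (fun x => if ¬(x = 1 ∨ x = 2) then (1:ℤ) else 0)).sum
        ≤ (((Finset.range j).filter (fun i =>
            ¬(v.getD i 0 - v.getD j 0 = 0 ∨ v.getD i 0 - v.getD j 0 = 1))).card : ℤ) := by
    intro j hj hval
    set TA := (Finset.Ico 2 (2 + A.length)).filter
      (fun i => ¬(v.getD i 0 = 1 ∨ v.getD i 0 = 2)) with hTAdef
    set TB := (Finset.Ico (3 + A.length) (3 + A.length + B.length)).filter
      (fun i => ¬(v.getD i 0 = 1 ∨ v.getD i 0 = 2)) with hTBdef
    have hdisj : Disjoint TA TB := by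
      rw [Finset.disjoint_left]
      intro i hi1 hi2
      simp only [hTAdef, hTBdef, Finset.mem_filter, Finset.mem_Ico] at hi1 hi2
      omega
    have hm1 : (2 + A.length) ∉ TA ∪ TB := by
      simp only [Finset.mem_union, hTAdef, hTBdef, Finset.mem_filter, Finset.mem_Ico]
      omega
    have hm2 : (1:ℕ) ∉ insert (2 + A.length) (TA ∪ TB) := by
      simp only [Finset.mem_insert, Finset.mem_union, hTAdef, hTBdef, Finset.mem_filter,
        Finset.mem_Ico]
      omega
    have hm3 : (0:ℕ) ∉ insert 1 (insert (2 + A.length) (TA ∪ TB)) := by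
      simp only [Finset.mem_insert, Finset.mem_union, hTAdef, hTBdef, Finset.mem_filter,
        Finset.mem_Ico]
      omega
    have hsub : insert 0 (insert 1 (insert (2 + A.length) (TA ∪ TB)))
        ⊆ (Finset.range j).filter (fun i =>
          ¬(v.getD i 0 - v.getD j 0 = 0 ∨ v.getD i 0 - v.getD j 0 = 1)) := by
      intro i hi
      simp only [Finset.mem_insert, Finset.mem_union, hTAdef, hTBdef, Finset.mem_filter,
        Finset.mem_Ico] at hi
      simp only [Finset.mem_filter, Finset.mem_range, hval]
      rcases hi with rfl | rfl | rfl | ⟨⟨h2i, hij⟩, hc⟩ | ⟨⟨h2i, hij⟩, hc⟩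
      · exact ⟨by omega, by rw [hw0]; omega⟩
      · exact ⟨by omega, by rw [hw1]; omega⟩
      · exact ⟨by omega, by rw [hwMid]; omega⟩
      · exact ⟨by omega, by omega⟩
      · exact ⟨by omega, by omega⟩
    have hcard := Finset.card_le_card hsub
    rw [Finset.card_insert_of_notMem hm3, Finset.card_insert_of_notMem hm2,
      Finset.card_insert_of_notMem hm1, Finset.card_union_of_disjoint hdisj] at hcard
    have eTA : (TA.card : ℤ) = (A.map (fun x => if ¬(x = 1 ∨ x = 2) then (1:ℤ) else 0)).sum := by
      have e1 : ∑ i ∈ Finset.Ico 2 (2 + A.length),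
          (if ¬(v.getD i 0 = 1 ∨ v.getD i 0 = 2) then (1:ℤ) else 0)
          = (A.map (fun x => if ¬(x = 1 ∨ x = 2) then (1:ℤ) else 0)).sum :=
        Stmt3Aux.regsum (fun i => v.getD i 0) 2 A hwA (fun x => if ¬(x = 1 ∨ x = 2) then (1:ℤ) else 0)
      rw [← e1, Finset.sum_boole, hTAdef]
    have eTB : (TB.card : ℤ) = (B.map (fun x => if ¬(x = 1 ∨ x = 2) then (1:ℤ) else 0)).sum := by
      have e1 : ∑ i ∈ Finset.Ico (3 + A.length) (3 + A.length + B.length),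
          (if ¬(v.getD i 0 = 1 ∨ v.getD i 0 = 2) then (1:ℤ) else 0)
          = (B.map (fun x => if ¬(x = 1 ∨ x = 2) then (1:ℤ) else 0)).sum :=
        Stmt3Aux.regsum (fun i => v.getD i 0) (3 + A.length) B hwB (fun x => if ¬(x = 1 ∨ x = 2) then (1:ℤ) else 0)
      rw [← e1, Finset.sum_boole, hTBdef]
    omega
  have bnd2 : ∀ j, 4 + A.length + B.length ≤ j → v.getD j 0 = 2 →
      4 + (A.map (fun x => if ¬(x = 2 ∨ x = 3) then (1:ℤ) else 0)).sum
        + (B.map (fun x => if ¬(x = 2 ∨ x = 3) then (1:ℤ) else 0)).sum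
        ≤ (((Finset.range j).filter (fun i =>
            ¬(v.getD i 0 - v.getD j 0 = 0 ∨ v.getD i 0 - v.getD j 0 = 1))).card : ℤ) := by
    intro j hj hval
    set TA := (Finset.Ico 2 (2 + A.length)).filter
      (fun i => ¬(v.getD i 0 = 2 ∨ v.getD i 0 = 3)) with hTAdef
    set TB := (Finset.Ico (3 + A.length) (3 + A.length + B.length)).filter
      (fun i => ¬(v.getD i 0 = 2 ∨ v.getD i 0 = 3)) with hTBdef
    have hdisj : Disjoint TA TB := by
      rw [Finset.disjoint_left]
      intro i hi1 hi2
      simp only [hTAdef, hTBdef, Finset.mem_filter, Finset.mem_Ico] at hi1 hi2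
      omega
    have hm0 : (3 + A.length + B.length) ∉ TA ∪ TB := by
      simp only [Finset.mem_union, hTAdef, hTBdef, Finset.mem_filter, Finset.mem_Ico]
      omega
    have hm1 : (2 + A.length) ∉ insert (3 + A.length + B.length) (TA ∪ TB) := by
      simp only [Finset.mem_insert, Finset.mem_union, hTAdef, hTBdef, Finset.mem_filter,
        Finset.mem_Ico]
      omega
    have hm2 : (1:ℕ) ∉ insert (2 + A.length) (insert (3 + A.length + B.length) (TA ∪ TB)) := by
      simp only [Finset.mem_insert, Finset.mem_union, hTAdef, hTBdef, Finset.mem_filter,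
        Finset.mem_Ico]
      omega
    have hm3 : (0:ℕ) ∉ insert 1 (insert (2 + A.length)
        (insert (3 + A.length + B.length) (TA ∪ TB))) := by
      simp only [Finset.mem_insert, Finset.mem_union, hTAdef, hTBdef, Finset.mem_filter,
        Finset.mem_Ico]
      omega
    have hsub : insert 0 (insert 1 (insert (2 + A.length)
        (insert (3 + A.length + B.length) (TA ∪ TB))))
        ⊆ (Finset.range j).filter (fun i =>
          ¬(v.getD i 0 - v.getD j 0 = 0 ∨ v.getD i 0 - v.getD j 0 = 1)) := by
      intro i hi
      simp only [Finset.mem_insert, Finset.mem_union, hTAdef, hTBdef, Finset.mem_filter,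
        Finset.mem_Ico] at hi
      simp only [Finset.mem_filter, Finset.mem_range, hval]
      rcases hi with rfl | rfl | rfl | rfl | ⟨⟨h2i, hij⟩, hc⟩ | ⟨⟨h2i, hij⟩, hc⟩
      · exact ⟨by omega, by rw [hw0]; omega⟩
      · exact ⟨by omega, by rw [hw1]; omega⟩
      · exact ⟨by omega, by rw [hwMid]; omega⟩
      · exact ⟨by omega, by rw [hwOne]; omega⟩
      · exact ⟨by omega, by omega⟩
      · exact ⟨by omega, by omega⟩
    have hcard := Finset.card_le_card hsub
    rw [Finset.card_insert_of_notMem hm3, Finset.card_insert_of_notMem hm2,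
      Finset.card_insert_of_notMem hm1, Finset.card_insert_of_notMem hm0,
      Finset.card_union_of_disjoint hdisj] at hcard
    have eTA : (TA.card : ℤ) = (A.map (fun x => if ¬(x = 2 ∨ x = 3) then (1:ℤ) else 0)).sum := by
      have e1 : ∑ i ∈ Finset.Ico 2 (2 + A.length),
          (if ¬(v.getD i 0 = 2 ∨ v.getD i 0 = 3) then (1:ℤ) else 0)
          = (A.map (fun x => if ¬(x = 2 ∨ x = 3) then (1:ℤ) else 0)).sum :=
        Stmt3Aux.regsum (fun i => v.getD i 0) 2 A hwA (fun x => if ¬(x = 2 ∨ x = 3) then (1:ℤ) else 0)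
      rw [← e1, Finset.sum_boole, hTAdef]
    have eTB : (TB.card : ℤ) = (B.map (fun x => if ¬(x = 2 ∨ x = 3) then (1:ℤ) else 0)).sum := by
      have e1 : ∑ i ∈ Finset.Ico (3 + A.length) (3 + A.length + B.length),
          (if ¬(v.getD i 0 = 2 ∨ v.getD i 0 = 3) then (1:ℤ) else 0)
          = (B.map (fun x => if ¬(x = 2 ∨ x = 3) then (1:ℤ) else 0)).sum :=
        Stmt3Aux.regsum (fun i => v.getD i 0) (3 + A.length) B hwB (fun x => if ¬(x = 2 ∨ x = 3) then (1:ℤ) else 0)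
      rw [← e1, Finset.sum_boole, hTBdef]
    omega
  -- abstract the per-position count function
  have hbridge0 := Stmt3Aux.bridge v hpos
  obtain ⟨G, hGdef, hbridge⟩ : ∃ G : ℕ → ℤ,
      (∀ j, G j = (((Finset.range j).filter (fun i =>
        ¬(v.getD i 0 - v.getD j 0 = 0 ∨ v.getD i 0 - v.getD j 0 = 1))).card : ℤ))
      ∧ defc v = (∑ j ∈ Finset.range v.length, G j) - area v :=
    ⟨_, fun _ => rfl, hbridge0⟩
  -- split the range into chunks
  have split : ∑ j ∈ Finset.range v.length, G j
      = ((((((∑ j ∈ Finset.Ico 0 2, G j)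
        + ∑ j ∈ Finset.Ico 2 (2 + A.length), G j)
        + ∑ j ∈ Finset.Ico (2 + A.length) (3 + A.length), G j)
        + ∑ j ∈ Finset.Ico (3 + A.length) (3 + A.length + B.length), G j)
        + ∑ j ∈ Finset.Ico (3 + A.length + B.length) (4 + A.length + B.length), G j)
        + ∑ j ∈ Finset.Ico (4 + A.length + B.length) (4 + A.length + B.length + n), G j)
        + ∑ j ∈ Finset.Ico (4 + A.length + B.length + n) v.length, G j := by
    rw [Finset.range_eq_Ico,
      ← Finset.sum_Ico_consecutive G (show (0:ℕ) ≤ 2 by omega) (show 2 ≤ v.length by omega),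
      ← Finset.sum_Ico_consecutive G (show (2:ℕ) ≤ 2 + A.length by omega)
        (show 2 + A.length ≤ v.length by omega),
      ← Finset.sum_Ico_consecutive G (show 2 + A.length ≤ 3 + A.length by omega)
        (show 3 + A.length ≤ v.length by omega),
      ← Finset.sum_Ico_consecutive G (show 3 + A.length ≤ 3 + A.length + B.length by omega)
        (show 3 + A.length + B.length ≤ v.length by omega),
      ← Finset.sum_Ico_consecutive G
        (show 3 + A.length + B.length ≤ 4 + A.length + B.length by omega)
        (show 4 + A.length + B.length ≤ v.length by omega),
      ← Finset.sum_Ico_consecutive G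
        (show 4 + A.length + B.length ≤ 4 + A.length + B.length + n by omega)
        (show 4 + A.length + B.length + n ≤ v.length by omega)]
    ring
  -- chunk estimates
  have c0 : (0:ℤ) ≤ ∑ j ∈ Finset.Ico 0 2, G j :=
    Finset.sum_nonneg (fun j _ => by rw [hGdef]; positivity)
  have cA : (A.map (fun x => x + if 1 ≤ x then (1:ℤ) else 0)).sum
      ≤ ∑ j ∈ Finset.Ico 2 (2 + A.length), G j := by
    have e1 : ∑ j ∈ Finset.Ico 2 (2 + A.length),
        (v.getD j 0 + if 1 ≤ v.getD j 0 then (1:ℤ) else 0)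
        = (A.map (fun x => x + if 1 ≤ x then (1:ℤ) else 0)).sum :=
      Stmt3Aux.regsum (fun i => v.getD i 0) 2 A hwA (fun x => x + if 1 ≤ x then (1:ℤ) else 0)
    rw [← e1]
    exact Finset.sum_le_sum (fun j hj => by rw [hGdef]; exact bndA j hj)
  have cMid : (A.map (fun x => if ¬(x = 0 ∨ x = 1) then (1:ℤ) else 0)).sum
      ≤ ∑ j ∈ Finset.Ico (2 + A.length) (3 + A.length), G j := by
    rw [show 3 + A.length = (2 + A.length) + 1 by omega, Nat.Ico_succ_singleton,
      Finset.sum_singleton, hGdef]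
    exact bndMid
  have cB : (B.map (fun x => x + if 1 ≤ x then (2:ℤ) else 0)).sum
      ≤ ∑ j ∈ Finset.Ico (3 + A.length) (3 + A.length + B.length), G j := by
    have e1 : ∑ j ∈ Finset.Ico (3 + A.length) (3 + A.length + B.length),
        (v.getD j 0 + if 1 ≤ v.getD j 0 then (2:ℤ) else 0)
        = (B.map (fun x => x + if 1 ≤ x then (2:ℤ) else 0)).sum :=
      Stmt3Aux.regsum (fun i => v.getD i 0) (3 + A.length) B hwB (fun x => x + if 1 ≤ x then (2:ℤ) else 0)
    rw [← e1]
    exact Finset.sum_le_sum (fun j hj => by rw [hGdef]; exact bndB j hj)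
  have cOne : 3 + (A.map (fun x => if ¬(x = 1 ∨ x = 2) then (1:ℤ) else 0)).sum
      + (B.map (fun x => if ¬(x = 1 ∨ x = 2) then (1:ℤ) else 0)).sum
      ≤ ∑ j ∈ Finset.Ico (3 + A.length + B.length) (4 + A.length + B.length), G j := by
    rw [show 4 + A.length + B.length = (3 + A.length + B.length) + 1 by omega,
      Nat.Ico_succ_singleton, Finset.sum_singleton, hGdef]
    exact bndOne _ (le_refl _) hwOne
  have c2 : (n:ℤ) * (4 + (A.map (fun x => if ¬(x = 2 ∨ x = 3) then (1:ℤ) else 0)).sum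
      + (B.map (fun x => if ¬(x = 2 ∨ x = 3) then (1:ℤ) else 0)).sum)
      ≤ ∑ j ∈ Finset.Ico (4 + A.length + B.length) (4 + A.length + B.length + n), G j := by
    have e1 : ∑ j ∈ Finset.Ico (4 + A.length + B.length) (4 + A.length + B.length + n),
        (4 + (A.map (fun x => if ¬(x = 2 ∨ x = 3) then (1:ℤ) else 0)).sum
          + (B.map (fun x => if ¬(x = 2 ∨ x = 3) then (1:ℤ) else 0)).sum)
        = (n:ℤ) * (4 + (A.map (fun x => if ¬(x = 2 ∨ x = 3) then (1:ℤ) else 0)).sum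
          + (B.map (fun x => if ¬(x = 2 ∨ x = 3) then (1:ℤ) else 0)).sum) := by
      rw [Finset.sum_const, Nat.card_Ico,
        show 4 + A.length + B.length + n - (4 + A.length + B.length) = n by omega,
        nsmul_eq_mul]
    rw [← e1]
    refine Finset.sum_le_sum (fun j hj => ?_)
    rw [Finset.mem_Ico] at hj
    have hval : v.getD j 0 = 2 := by
      have := hw2 (j - (4 + A.length + B.length)) (by omega)
      rwa [show 4 + A.length + B.length + (j - (4 + A.length + B.length)) = j by omega] at this
    rw [hGdef]
    exact bnd2 j (by omega) hval
  have c1q : (q:ℤ) * (3 + (A.map (fun x => if ¬(x = 1 ∨ x = 2) then (1:ℤ) else 0)).sum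
      + (B.map (fun x => if ¬(x = 1 ∨ x = 2) then (1:ℤ) else 0)).sum)
      ≤ ∑ j ∈ Finset.Ico (4 + A.length + B.length + n) v.length, G j := by
    have e1 : ∑ j ∈ Finset.Ico (4 + A.length + B.length + n) v.length,
        (3 + (A.map (fun x => if ¬(x = 1 ∨ x = 2) then (1:ℤ) else 0)).sum
          + (B.map (fun x => if ¬(x = 1 ∨ x = 2) then (1:ℤ) else 0)).sum)
        = (q:ℤ) * (3 + (A.map (fun x => if ¬(x = 1 ∨ x = 2) then (1:ℤ) else 0)).sum
          + (B.map (fun x => if ¬(x = 1 ∨ x = 2) then (1:ℤ) else 0)).sum) := by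
      rw [Finset.sum_const, Nat.card_Ico,
        show v.length - (4 + A.length + B.length + n) = q by omega,
        nsmul_eq_mul]
    rw [← e1]
    refine Finset.sum_le_sum (fun j hj => ?_)
    rw [Finset.mem_Ico] at hj
    have hval : v.getD j 0 = 1 := by
      have := hw1q (j - (4 + A.length + B.length + n)) (by omega)
      rwa [show 4 + A.length + B.length + n + (j - (4 + A.length + B.length + n)) = j
        by omega] at this
    rw [hGdef]
    exact bndOne j (by omega) hval
  -- area
  have harea : area v = A.sum + B.sum + 1 + 2 * (n:ℤ) + (q:ℤ) := by
    rw [area, hv']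
    simp [List.sum_append, List.sum_replicate]
    ring
  -- final list inequalities
  have fA := Stmt3Aux.final_A A hposA
  have fB := Stmt3Aux.final_B B hposB
  have hCA0 : (0:ℤ) ≤ (A.map (fun x => if ¬(x = 2 ∨ x = 3) then (1:ℤ) else 0)).sum :=
    Stmt3Aux.mapsum_nonneg _ _ (fun x => by split_ifs <;> norm_num)
  have hCB0 : (0:ℤ) ≤ (B.map (fun x => if ¬(x = 2 ∨ x = 3) then (1:ℤ) else 0)).sum :=
    Stmt3Aux.mapsum_nonneg _ _ (fun x => by split_ifs <;> norm_num)
  have hDA0 : (0:ℤ) ≤ (A.map (fun x => if ¬(x = 1 ∨ x = 2) then (1:ℤ) else 0)).sum :=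
    Stmt3Aux.mapsum_nonneg _ _ (fun x => by split_ifs <;> norm_num)
  have hDB0 : (0:ℤ) ≤ (B.map (fun x => if ¬(x = 1 ∨ x = 2) then (1:ℤ) else 0)).sum :=
    Stmt3Aux.mapsum_nonneg _ _ (fun x => by split_ifs <;> norm_num)
  have h1n : (1:ℤ) ≤ (n:ℤ) := by exact_mod_cast hn
  have hq0 : (0:ℤ) ≤ (q:ℤ) := by positivity
  have hmuln : (A.map (fun x => if ¬(x = 2 ∨ x = 3) then (1:ℤ) else 0)).sum
      + (B.map (fun x => if ¬(x = 2 ∨ x = 3) then (1:ℤ) else 0)).sum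
      ≤ (n:ℤ) * ((A.map (fun x => if ¬(x = 2 ∨ x = 3) then (1:ℤ) else 0)).sum
        + (B.map (fun x => if ¬(x = 2 ∨ x = 3) then (1:ℤ) else 0)).sum) :=
    le_mul_of_one_le_left (by linarith) h1n
  have hmulq : (0:ℤ) ≤ (q:ℤ) * ((A.map (fun x => if ¬(x = 1 ∨ x = 2) then (1:ℤ) else 0)).sum
      + (B.map (fun x => if ¬(x = 1 ∨ x = 2) then (1:ℤ) else 0)).sum) :=
    mul_nonneg hq0 (by linarith)
  rw [hbridge, split, harea]
  nlinarith [c0, cA, cMid, cB, cOne, c2, c1q, fA, fB, hmuln, hmulq, h1n, hq0,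
    hCA0, hCB0, hDA0, hDB0]
end

section
/- Let z be a Dyck vector and let v = 0 0 z⁺, where z⁺ is obtained from z by adding 1 to every entry. Then len(v) = len(z) + 2, area(v) = area(z) + len(z), dinv(v) = dinv(z) + 1, and defc(v) = defc(z) + len(z) > defc(z). -/
lemma negContrib_nonneg {x : ℤ} (h : 0 ≤ x) : negContrib x = 0 := by
  simp [negContrib]; omega

lemma sum_map_negContrib {z : List ℤ} (h : ∀ x ∈ z, 0 ≤ x) :
    (z.map negContrib).sum = 0 := by
  apply List.sum_eq_zero
  intro x hx
  obtain ⟨y, hy, rfl⟩ := List.mem_map.1 hx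
  exact negContrib_nonneg (h y hy)

lemma sum_map_add_one (z : List ℤ) : (z.map (· + 1)).sum = z.sum + z.length := by
  induction z with
  | nil => simp
  | cons a t ih => simp [ih]; ring

theorem stmt5 (z : List ℤ) (hz : IsDyck z) :
    ((0:ℤ) :: 0 :: z.map (· + 1)).length = z.length + 2 ∧
    area ((0:ℤ) :: 0 :: z.map (· + 1)) = area z + z.length ∧
    dinv ((0:ℤ) :: 0 :: z.map (· + 1)) = dinv z + 1 ∧
    defc ((0:ℤ) :: 0 :: z.map (· + 1)) = defc z + z.length ∧
    defc z < defc ((0:ℤ) :: 0 :: z.map (· + 1)) := by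
  obtain ⟨⟨hhead, _⟩, hpos⟩ := hz
  have hnz : z ≠ [] := by intro h; simp [h] at hhead
  have hn : 0 < z.length := List.length_pos_iff.2 hnz
  set v : List ℤ := (0:ℤ) :: 0 :: z.map (· + 1) with hv
  have hvlen : v.length = z.length + 2 := by simp [hv]
  have harea : area v = area z + z.length := by
    simp [area, hv, sum_map_add_one]
  have hget : ∀ (k : ℕ) (h : k + 2 < v.length) (h' : k < z.length),
      v.get ⟨k + 2, h⟩ = z.get ⟨k, h'⟩ + 1 := by
    intro k h h'
    simp [hv, List.get_eq_getElem]
  have hget0 : ∀ (h : 0 < v.length), v.get ⟨0, h⟩ = 0 := fun _ => rfl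
  have hget1 : ∀ (h : 1 < v.length), v.get ⟨1, h⟩ = 0 := fun _ => rfl
  have hzge : ∀ (k : ℕ) (h : k < z.length), 0 ≤ z.get ⟨k, h⟩ := by
    intro k h
    apply hpos
    simp only [List.get_eq_getElem]
    exact List.getElem_mem h
  have hdinv : dinv v = dinv z + 1 := by
    have h0 : (0 : ℕ) < v.length := by omega
    have h1 : (1 : ℕ) < v.length := by omega
    have e : ∀ k : ℕ, k < z.length → k + 2 < v.length := by intro k hk; omega
    have key : (Finset.univ.filter (fun p : Fin v.length × Fin v.length =>
        (p.1 : ℕ) < (p.2 : ℕ) ∧ (v.get p.1 - v.get p.2 = 0 ∨ v.get p.1 - v.get p.2 = 1))) =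
        insert ((⟨0, h0⟩ : Fin v.length), (⟨1, h1⟩ : Fin v.length))
          ((Finset.univ.filter (fun p : Fin z.length × Fin z.length =>
            (p.1 : ℕ) < (p.2 : ℕ) ∧ (z.get p.1 - z.get p.2 = 0 ∨ z.get p.1 - z.get p.2 = 1))).image
            (fun p => ((⟨p.1 + 2, e _ p.1.2⟩ : Fin v.length), (⟨p.2 + 2, e _ p.2.2⟩ : Fin v.length)))) := by
      ext ⟨⟨a, ha⟩, ⟨b, hb⟩⟩
      simp only [Finset.mem_filter, Finset.mem_univ, true_and, Finset.mem_insert,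
        Finset.mem_image, Prod.mk.injEq, Fin.mk.injEq, Prod.exists]
      constructor
      · rintro ⟨hab, hd⟩
        match a, b with
        | 0, 1 => left; exact ⟨rfl, rfl⟩
        | 0, 0 => omega
        | 0, (b+2) =>
            exfalso
            have hb' : b < z.length := by omega
            rw [hget0, hget b hb hb'] at hd
            have := hzge b hb'
            omega
        | 1, (b+2) =>
            exfalso
            have hb' : b < z.length := by omega
            rw [hget1, hget b hb hb'] at hd
            have := hzge b hb'
            omega
        | (a+1), 0 => omega
        | (a+2), 1 => omega
        | 1, 1 => omega
        | (a+2), (b+2) =>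
            right
            have ha' : a < z.length := by omega
            have hb' : b < z.length := by omega
            refine ⟨⟨a, ha'⟩, ⟨b, hb'⟩, ⟨⟨show a < b by omega, ?_⟩, rfl, rfl⟩⟩
            rw [hget a ha ha', hget b hb hb'] at hd
            show z.get ⟨a, ha'⟩ - z.get ⟨b, hb'⟩ = 0 ∨ z.get ⟨a, ha'⟩ - z.get ⟨b, hb'⟩ = 1
            omega
      · rintro (⟨rfl, rfl⟩ | ⟨a', b', ⟨hab, hd⟩, rfl, rfl⟩)
        · exact ⟨by omega, by rw [hget0, hget1]; left; ring⟩
        · refine ⟨by omega, ?_⟩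
          rw [hget a' (e _ a'.2) a'.2, hget b' (e _ b'.2) b'.2]
          simp only [Fin.eta]
          omega
    have hnotmem : ((⟨0, h0⟩ : Fin v.length), (⟨1, h1⟩ : Fin v.length)) ∉
        ((Finset.univ.filter (fun p : Fin z.length × Fin z.length =>
            (p.1 : ℕ) < (p.2 : ℕ) ∧ (z.get p.1 - z.get p.2 = 0 ∨ z.get p.1 - z.get p.2 = 1))).image
            (fun p => ((⟨p.1 + 2, e _ p.1.2⟩ : Fin v.length), (⟨p.2 + 2, e _ p.2.2⟩ : Fin v.length)))) := by
      simp only [Finset.mem_image, Prod.mk.injEq, Fin.mk.injEq, not_exists, not_and, Prod.exists]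
      intro p1 p2 _
      omega
    have hinj : Function.Injective (fun p : Fin z.length × Fin z.length =>
        ((⟨p.1 + 2, e _ p.1.2⟩ : Fin v.length), (⟨p.2 + 2, e _ p.2.2⟩ : Fin v.length))) := by
      rintro ⟨p1, p2⟩ ⟨q1, q2⟩ h
      simp only [Prod.mk.injEq, Fin.mk.injEq] at h
      have h1' : p1 = q1 := Fin.ext (by omega)
      have h2' : p2 = q2 := Fin.ext (by omega)
      rw [h1', h2']
    rw [dinv, dinv, key, Finset.card_insert_of_notMem hnotmem,
      Finset.card_image_of_injective _ hinj]
    · have hs1 : (v.map negContrib).sum = 0 := by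
        apply sum_map_negContrib
        intro x hx
        rw [hv, List.mem_cons, List.mem_cons, List.mem_map] at hx
        rcases hx with h | h | ⟨y, hy, rfl⟩
        · omega
        · omega
        · have := hpos y hy; omega
      have hs2 : (z.map negContrib).sum = 0 := sum_map_negContrib hpos
      rw [hs1, hs2]
  have hchoose : (v.length.choose 2 : ℤ) = (z.length.choose 2 : ℤ) + 2 * z.length + 1 := by
    rw [hvlen]
    have : (z.length + 2).choose 2 = z.length.choose 2 + 2 * z.length + 1 := by
      simp [Nat.choose_succ_succ, Nat.choose_one_right]; ring
    rw [this]; push_cast; ring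
  have hdefc : defc v = defc z + z.length := by
    rw [defc, defc, hdinv, harea, hchoose]; push_cast; ring
  have hlt : defc z < defc v := by
    rw [hdefc]
    have h0 : (0:ℤ) < (z.length : ℤ) := by exact_mod_cast hn
    linarith
  exact ⟨hvlen, harea, hdinv, hdefc, hlt⟩
end

section
/- The map sending each integer partition λ to the set {φ_n(λ) : n > ℓ(λ)}, where φ_n(λ) = (0-λ_n, 1-λ_{n-1}, ..., (n-1)-λ_1), is a bijection from the set of all integer partitions onto the set of all equivalence classes of quasi-Dyck vectors under the equivalence generated by v ~ 0 v⁺. -/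
def up (v : List ℤ) : List ℤ := 0 :: v.map (· + 1)

lemma eqv_up_iterate (v : List ℤ) (m : ℕ) : Relation.EqvGen stepRel v (up^[m] v) := by
  induction m with
  | zero => exact Relation.EqvGen.refl v
  | succ k ih =>
    exact Relation.EqvGen.trans _ _ _ ih
      (Relation.EqvGen.rel _ _ (by rw [Function.iterate_succ_apply']; rfl))

lemma eqvGen_iff (v w : List ℤ) :
    Relation.EqvGen stepRel v w ↔ ∃ m n, up^[m] v = up^[n] w := by
  constructor
  · intro h
    induction h with
    | rel a b hab => exact ⟨1, 0, by simp [up, stepRel] at hab ⊢; exact hab.symm⟩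
    | refl a => exact ⟨0, 0, rfl⟩
    | symm a b _ ih => obtain ⟨m, n, h⟩ := ih; exact ⟨n, m, h.symm⟩
    | trans a b c _ _ ih1 ih2 =>
      obtain ⟨m, n, h1⟩ := ih1
      obtain ⟨p, q, h2⟩ := ih2
      refine ⟨p + m, n + q, ?_⟩
      calc up^[p + m] a = up^[p] (up^[m] a) := Function.iterate_add_apply ..
        _ = up^[p] (up^[n] b) := by rw [h1]
        _ = up^[n] (up^[p] b) := by
              rw [← Function.iterate_add_apply, Nat.add_comm, Function.iterate_add_apply]
        _ = up^[n] (up^[q] c) := by rw [h2]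
        _ = up^[n + q] c := (Function.iterate_add_apply ..).symm
  · rintro ⟨m, n, h⟩
    exact Relation.EqvGen.trans _ _ _ (h ▸ eqv_up_iterate v m)
      (Relation.EqvGen.symm _ _ (eqv_up_iterate w n))

lemma phi_length (l : List ℕ) (n : ℕ) : (phi l n).length = n := by simp [phi]

lemma phi_getElem (l : List ℕ) (n : ℕ) {i : ℕ} (h : i < (phi l n).length) :
    (phi l n)[i] = (i : ℤ) - (l.getD (n - 1 - i) 0 : ℤ) := by
  simp [phi]

lemma phi_succ (l : List ℕ) (n : ℕ) (h : l.length ≤ n) :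
    phi l (n + 1) = up (phi l n) := by
  apply List.ext_getElem
  · simp [phi_length, up, phi]
  · intro j h1 h2
    rw [phi_getElem]
    rcases j with _ | i
    · rw [List.getD_eq_default _ _ (show l.length ≤ n + 1 - 1 - 0 by omega)]
      simp [up]
    · have hi : i < (phi l n).length := by
        simp only [phi_length] at h1 ⊢; omega
      have : (up (phi l n))[i + 1] = (phi l n)[i] + 1 := by
        simp [up]
      rw [this, phi_getElem]
      have : n + 1 - 1 - (i + 1) = n - 1 - i := by omega
      rw [this]
      push_cast
      ring

lemma phi_iter (l : List ℕ) (n m : ℕ) (h : l.length ≤ n) :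
    up^[m] (phi l n) = phi l (n + m) := by
  induction m with
  | zero => rfl
  | succ k ih =>
    rw [Function.iterate_succ_apply', ih, ← phi_succ l (n + k) (by omega)]
    rfl

lemma getD_anti {l : List ℕ} (h : IsPartitionList l) {a b : ℕ} (hab : a ≤ b) :
    l.getD b 0 ≤ l.getD a 0 := by
  rcases lt_or_ge b l.length with hb | hb
  · have ha : a < l.length := lt_of_le_of_lt hab hb
    rw [List.getD_eq_getElem _ _ hb, List.getD_eq_getElem _ _ ha]
    rcases eq_or_lt_of_le hab with rfl | hlt
    · exact le_refl _
    · exact (List.pairwise_iff_getElem.mp h.1) a b ha hb hlt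
  · rw [List.getD_eq_default _ _ hb]
    exact Nat.zero_le _

lemma phi_isQDV {l : List ℕ} (h : IsPartitionList l) {n : ℕ} (hn : l.length < n) :
    IsQDV (phi l n) := by
  constructor
  · obtain ⟨k, rfl⟩ : ∃ k, n = k + 1 := ⟨n - 1, by omega⟩
    show (phi l (k + 1)).head? = some 0
    rw [phi, List.ofFn_succ]
    simp only [List.head?_cons, Option.some.injEq, Fin.val_zero]
    rw [List.getD_eq_default _ _ (show l.length ≤ k + 1 - 1 - (0:ℕ) by omega)]
    push_cast
    try ring
  · intro i hi
    rw [phi_length] at hi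
    rw [List.getD_eq_getElem _ _ (by rw [phi_length]; omega),
        List.getD_eq_getElem _ _ (by rw [phi_length]; omega),
        phi_getElem, phi_getElem]
    have key : l.getD (n - 1 - i) 0 ≤ l.getD (n - 1 - (i + 1)) 0 :=
      getD_anti h (by omega)
    push_cast
    have : (l.getD (n - 1 - i) 0 : ℤ) ≤ (l.getD (n - 1 - (i + 1)) 0 : ℤ) := by
      exact_mod_cast key
    omega

lemma filter_pos_getD : ∀ (g : List ℕ), g.Pairwise (· ≥ ·) →
    ∀ j, (g.filter (fun x => 0 < x)).getD j 0 = g.getD j 0 := by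
  intro g
  induction g with
  | nil => intro _ j; rfl
  | cons a t ih =>
    intro hs j
    have ht : t.Pairwise (· ≥ ·) := hs.of_cons
    have hall : ∀ x ∈ t, x ≤ a := fun x hx => List.rel_of_pairwise_cons hs hx
    by_cases ha : 0 < a
    · rw [List.filter_cons_of_pos (by simpa using ha)]
      rcases j with _ | j
      · rfl
      · show (t.filter _).getD j 0 = t.getD j 0
        exact ih ht j
    · have ha0 : a = 0 := by omega
      subst ha0
      have htz : ∀ x ∈ t, x = 0 := fun x hx => Nat.le_zero.mp (hall x hx)
      have : (0 :: t).filter (fun x => 0 < x) = [] := by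
        rw [List.filter_eq_nil_iff]
        intro x hx
        rcases List.mem_cons.mp hx with rfl | hx
        · simp
        · simp [htz x hx]
      rw [this]
      rcases j with _ | j
      · rfl
      · show (0:ℕ) = t.getD j 0
        rcases lt_or_ge j t.length with hj | hj
        · rw [List.getD_eq_getElem _ _ hj]
          exact (htz _ (List.getElem_mem hj)).symm
        · rw [List.getD_eq_default _ _ hj]

lemma qdv_getD_le {v : List ℤ} (hv : IsQDV v) : ∀ i < v.length, v.getD i 0 ≤ (i : ℤ) := by
  intro i
  induction i with
  | zero =>
    intro h0
    have h00 : v.getD 0 0 = 0 := by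
      rcases v with _ | ⟨a, t⟩
      · simp at h0
      · have := hv.1
        simp only [List.head?_cons, Option.some.injEq] at this
        simp [this]
    rw [show (((0:ℕ)):ℤ) = 0 from rfl, h00]
  | succ k ih =>
    intro hk
    have h1 := hv.2 k hk
    have h2 := ih (by omega)
    push_cast
    omega
-- AUX END

lemma qdv_getD_zero {v : List ℤ} (hv : IsQDV v) : v.getD 0 0 = 0 := by
  rcases v with _ | ⟨a, t⟩
  · rfl
  · have := hv.1
    simp only [List.head?_cons, Option.some.injEq] at this
    simp [this]

theorem stmt6 :
    Set.BijOn (fun l : List ℕ => cls (phi l (l.length + 1)))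
      {l : List ℕ | IsPartitionList l}
      {c : DyckClass | ∃ v, IsQDV v ∧ c = cls v} := by
  refine ⟨?_, ?_, ?_⟩
  · -- MapsTo
    intro l hl
    exact ⟨phi l (l.length + 1), phi_isQDV hl (by omega), rfl⟩
  · -- InjOn
    intro l hl l' hl' h
    simp only [Set.mem_setOf_eq] at hl hl'
    have h' : Relation.EqvGen stepRel (phi l (l.length + 1)) (phi l' (l'.length + 1)) :=
      Quotient.exact h
    rw [eqvGen_iff] at h'
    obtain ⟨m, n, hmn⟩ := h'
    rw [phi_iter _ _ _ (by omega), phi_iter _ _ _ (by omega)] at hmn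
    have hlena : l.length + 1 + m = l'.length + 1 + n := by
      have := congrArg List.length hmn
      simpa [phi_length] using this
    set N := l.length + 1 + m with hN
    rw [← hlena] at hmn
    rw [phi, phi, List.ofFn_inj] at hmn
    have hent : ∀ j, l.getD j 0 = l'.getD j 0 := by
      intro j
      rcases lt_or_ge j N with hj | hj
      · have hi : N - 1 - j < N := by omega
        have := congrFun hmn ⟨N - 1 - j, hi⟩
        simp only [sub_right_inj, Nat.cast_inj] at this
        have hj' : N - 1 - (N - 1 - j) = j := by omega
        rwa [hj'] at this
      · rw [List.getD_eq_default _ _ (by omega), List.getD_eq_default _ _ (by omega)]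
    have hlen : l.length = l'.length := by
      rcases Nat.lt_trichotomy l.length l'.length with hlt | heq | hgt
      · exfalso
        have h1 := hent l.length
        rw [List.getD_eq_default _ _ le_rfl, List.getD_eq_getElem _ _ hlt] at h1
        exact absurd (hl'.2 _ (List.getElem_mem hlt)) (by omega)
      · exact heq
      · exfalso
        have h1 := hent l'.length
        rw [List.getD_eq_default _ _ le_rfl, List.getD_eq_getElem _ _ hgt] at h1
        exact absurd (hl.2 _ (List.getElem_mem hgt)) (by omega)
    apply List.ext_getElem hlen
    intro j h1 h2
    have := hent j
    rwa [List.getD_eq_getElem _ _ h1, List.getD_eq_getElem _ _ h2] at this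
  · -- SurjOn
    intro c hc
    obtain ⟨v, hv, rfl⟩ := hc
    set n := v.length with hn
    have hne : v ≠ [] := by
      intro h
      rw [h] at hv
      simp [IsQDV] at hv
    have hn0 : 0 < n := by
      rw [hn]
      exact List.length_pos_iff.mpr hne
    have hle : ∀ i < n, v.getD i 0 ≤ (i : ℤ) := qdv_getD_le hv
    have hv0 : v.getD 0 0 = 0 := qdv_getD_zero hv
    set F : ℕ → ℕ := fun j => (((n - 1 - j : ℕ) : ℤ) - v.getD (n - 1 - j) 0).toNat with hFdef
    have hF : ∀ j, (F j : ℤ) = ((n - 1 - j : ℕ) : ℤ) - v.getD (n - 1 - j) 0 := by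
      intro j
      apply Int.toNat_of_nonneg
      have := hle (n - 1 - j) (by omega)
      omega
    have hstep : ∀ j, F (j + 1) ≤ F j := by
      intro j
      have key : (F (j + 1) : ℤ) ≤ (F j : ℤ) := by
        rw [hF, hF]
        rcases lt_or_ge (j + 1) (n - 1) with hj | hj
        · have hidx : n - 1 - (j + 1) + 1 = n - 1 - j := by omega
          have hq := hv.2 (n - 1 - (j + 1)) (by omega)
          rw [hidx] at hq
          have hc1 : ((n - 1 - (j + 1) : ℕ) : ℤ) + 1 = ((n - 1 - j : ℕ) : ℤ) := by
            exact_mod_cast congrArg (Nat.cast : ℕ → ℤ) hidx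
          omega
        · have h1 : n - 1 - (j + 1) = 0 := by omega
          rw [h1]
          simp only [Nat.cast_zero, hv0]
          have := hle (n - 1 - j) (by omega)
          omega
      exact_mod_cast key
    have hanti : Antitone F := antitone_nat_of_succ_le hstep
    set g : List ℕ := (List.range n).map F with hgdef
    have hglen : g.length = n := by simp [hgdef]
    have hg_getD : ∀ j, g.getD j 0 = F j := by
      intro j
      rcases lt_or_ge j n with hj | hj
      · rw [List.getD_eq_getElem _ _ (by rw [hglen]; exact hj)]
        simp [hgdef]
      · rw [List.getD_eq_default _ _ (by omega)]
        have : (F j : ℤ) = 0 := by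
          rw [hF]
          have h1 : n - 1 - j = 0 := by omega
          rw [h1]
          rw [hv0]; simp
        omega
    have hg_sorted : g.Pairwise (· ≥ ·) := by
      rw [List.pairwise_iff_getElem]
      intro i j hi hj hij
      simp only [hgdef, List.getElem_map, List.getElem_range]
      exact hanti hij.le
    set l : List ℕ := g.filter (fun x => 0 < x) with hldef
    have hl_getD : ∀ j, l.getD j 0 = F j := by
      intro j
      rw [hldef, filter_pos_getD g hg_sorted j]
      exact hg_getD j
    have hl_pos : ∀ x ∈ l, 0 < x := by
      intro x hx
      rw [hldef, List.mem_filter] at hx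
      simpa using hx.2
    have hl_sorted : l.Pairwise (· ≥ ·) := List.Pairwise.filter _ hg_sorted
    have hFtop : F (n - 1) = 0 := by
      have : (F (n - 1) : ℤ) = 0 := by
        rw [hF]
        have h1 : n - 1 - (n - 1) = 0 := by omega
        rw [h1]
        rw [hv0]; simp
      omega
    have hl_len : l.length < n := by
      by_contra hcon
      push_neg at hcon
      have h1 : n - 1 < l.length := by omega
      have h2 := hl_getD (n - 1)
      rw [List.getD_eq_getElem _ _ h1, hFtop] at h2
      exact absurd (hl_pos _ (List.getElem_mem h1)) (by omega)
    have hphi : phi l n = v := by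
      apply List.ext_getElem (by rw [phi_length, hn])
      intro i h1 h2
      rw [phi_getElem, hl_getD]
      have hc1 : (F (n - 1 - i) : ℤ) = (i : ℤ) - v.getD i 0 := by
        rw [hF]
        have hidx : n - 1 - (n - 1 - i) = i := by
          rw [phi_length] at h1
          omega
        rw [hidx]
      rw [hc1, List.getD_eq_getElem _ _ h2]
      ring
    refine ⟨l, ⟨hl_sorted, hl_pos⟩, ?_⟩
    show cls (phi l (l.length + 1)) = cls v
    have hiter : up^[n - (l.length + 1)] (phi l (l.length + 1)) = v := by
      rw [phi_iter _ _ _ (by omega)]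
      rw [show l.length + 1 + (n - (l.length + 1)) = n by omega]
      exact hphi
    apply Quotient.sound
    show Relation.EqvGen stepRel _ _
    rw [← hiter]
    exact eqv_up_iterate _ _
end

section
/- dinv is constant on Dyck classes: for any quasi-Dyck vector v, dinv(0 v⁺) = dinv(v); similarly defc(0 v⁺) = defc(v). -/
lemma pc_eq (l : List ℤ) :
    (Finset.univ.filter (fun p : Fin l.length × Fin l.length =>
      (p.1 : ℕ) < (p.2 : ℕ) ∧ (l.get p.1 - l.get p.2 = 0 ∨ l.get p.1 - l.get p.2 = 1))).card
    = ∑ i ∈ Finset.range l.length, ∑ j ∈ Finset.range l.length,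
        if i < j ∧ (l.getD i 0 - l.getD j 0 = 0 ∨ l.getD i 0 - l.getD j 0 = 1) then 1 else 0 := by
  rw [Finset.card_filter, Fintype.sum_prod_type]
  rw [← Fin.sum_univ_eq_sum_range (fun i => ∑ j ∈ Finset.range l.length,
    if i < j ∧ (l.getD i 0 - l.getD j 0 = 0 ∨ l.getD i 0 - l.getD j 0 = 1) then 1 else 0)]
  refine Finset.sum_congr rfl fun i _ => ?_
  rw [← Fin.sum_univ_eq_sum_range]
  refine Finset.sum_congr rfl fun j _ => ?_
  rw [List.getD_eq_getElem _ _ i.isLt, List.getD_eq_getElem _ _ j.isLt]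
  simp [List.get_eq_getElem]

lemma map_sum_eq (f : ℤ → ℕ) (l : List ℤ) :
    (l.map f).sum = ∑ i ∈ Finset.range l.length, f (l.getD i 0) := by
  induction l with
  | nil => simp
  | cons a t ih =>
      rw [List.map_cons, List.sum_cons, List.length_cons, Finset.sum_range_succ']
      simp [ih, Nat.add_comm]

lemma dinv_shift (v : List ℤ) : dinv ((0:ℤ) :: v.map (· + 1)) = dinv v := by
  set w : List ℤ := (0:ℤ) :: v.map (· + 1) with hw
  set N := v.length with hN
  have hlen : w.length = N + 1 := by simp [hw, hN]
  have hget0 : w.getD 0 0 = 0 := rfl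
  have hgets : ∀ i < N, w.getD (i + 1) 0 = v.getD i 0 + 1 := by
    intro i hi
    rw [hw, List.getD_cons_succ, List.getD_eq_getElem _ _ (by simpa using hi),
      List.getD_eq_getElem _ _ hi]
    simp
  unfold dinv
  rw [pc_eq, pc_eq, hlen]
  rw [Finset.sum_range_succ']
  have h0 : (∑ j ∈ Finset.range (N + 1),
      if 0 < j ∧ (w.getD 0 0 - w.getD j 0 = 0 ∨ w.getD 0 0 - w.getD j 0 = 1) then 1 else 0)
      = ∑ j ∈ Finset.range N,
        (if v.getD j 0 = -1 ∨ v.getD j 0 = -2 then 1 else 0) := by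
    rw [Finset.sum_range_succ']
    simp only [Nat.lt_irrefl, false_and, if_false, add_zero]
    refine Finset.sum_congr rfl fun j hj => ?_
    rw [hget0, hgets j (Finset.mem_range.mp hj)]
    split_ifs <;> omega
  have hrest : (∑ i ∈ Finset.range N, ∑ j ∈ Finset.range (N + 1),
      if i + 1 < j ∧ (w.getD (i+1) 0 - w.getD j 0 = 0 ∨ w.getD (i+1) 0 - w.getD j 0 = 1)
        then 1 else 0)
      = ∑ i ∈ Finset.range N, ∑ j ∈ Finset.range N,
        if i < j ∧ (v.getD i 0 - v.getD j 0 = 0 ∨ v.getD i 0 - v.getD j 0 = 1) then 1 else 0 := by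
    refine Finset.sum_congr rfl fun i hi => ?_
    rw [Finset.sum_range_succ']
    simp only [Nat.not_lt_zero, false_and, if_false, add_zero]
    refine Finset.sum_congr rfl fun j hj => ?_
    rw [hgets i (Finset.mem_range.mp hi), hgets j (Finset.mem_range.mp hj)]
    split_ifs <;> omega
  rw [h0, hrest]
  have hmap : (w.map negContrib).sum =
      ∑ j ∈ Finset.range N, negContrib (v.getD j 0 + 1) := by
    rw [hw, List.map_cons, List.sum_cons, List.map_map]
    have : negContrib 0 = 0 := by decide
    rw [this, Nat.zero_add, map_sum_eq]
    rfl
  rw [hmap, map_sum_eq negContrib v, ← hN]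
  have key : (∑ j ∈ Finset.range N, (if v.getD j 0 = -1 ∨ v.getD j 0 = -2 then 1 else 0))
      + ∑ j ∈ Finset.range N, negContrib (v.getD j 0 + 1)
      = ∑ j ∈ Finset.range N, negContrib (v.getD j 0) := by
    rw [← Finset.sum_add_distrib]
    refine Finset.sum_congr rfl fun j _ => ?_
    simp only [negContrib]
    split_ifs <;> omega
  omega


theorem stmt7 (v : List ℤ) (hv : IsQDV v) :
    dinv ((0:ℤ) :: v.map (· + 1)) = dinv v ∧
    defc ((0:ℤ) :: v.map (· + 1)) = defc v := by
  have hd := dinv_shift v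
  refine ⟨hd, ?_⟩
  unfold defc area
  rw [hd]
  have hsum : ((v.map (· + 1)).sum : ℤ) = v.sum + v.length := by
    induction v with
    | nil => simp
    | cons a t ih => simp [ih]; ring
  have hlen : ((0:ℤ) :: v.map (· + 1)).length = v.length + 1 := by simp
  rw [hlen, List.sum_cons, hsum]
  have hch : (v.length + 1).choose 2 = v.length.choose 2 + v.length := by
    rw [Nat.choose_succ_succ]
    simp [Nat.choose_one_right, Nat.add_comm]
  rw [hch]
  push_cast
  ring
end

section
/- For any partition γ in D₁ = {γ : γ_1 ≤ ℓ(γ)+2}, the partition NU₁(γ) = (ℓ(γ)+1, γ_1-1, ..., γ_ℓ-1) satisfies |NU₁(γ)| = |γ| + 1, defc(NU₁(γ)) = defc(γ), and dinv(NU₁(γ)) = dinv(γ) + 1. -/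
def hh (l : List ℕ) (c : ℕ) : ℕ := (l.filter (fun x => c ≤ x)).length

lemma hh_cons (a : ℕ) (t : List ℕ) (c : ℕ) :
    hh (a :: t) c = (if c ≤ a then 1 else 0) + hh t c := by
  simp only [hh, List.filter_cons]
  by_cases h : c ≤ a
  · rw [if_pos h, if_pos (by simpa using h)]; simp; omega
  · rw [if_neg h, if_neg (by simpa using h)]; simp


lemma hh_eq_zero (l : List ℕ) (c : ℕ) (h : ∀ x ∈ l, x < c) : hh l c = 0 := by
  simp only [hh, List.length_eq_zero_iff, List.filter_eq_nil_iff]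
  intro x hx
  have := h x hx
  simp only [decide_eq_true_eq]
  omega

lemma hh_le (l : List ℕ) (c : ℕ) : hh l c ≤ l.length :=
  List.length_filter_le _ _

lemma hh_anti (l : List ℕ) {c d : ℕ} (h : c ≤ d) : hh l d ≤ hh l c := by
  induction l with
  | nil => simp [hh]
  | cons a t ih =>
    rw [hh_cons, hh_cons]
    have : (if d ≤ a then 1 else 0) ≤ (if c ≤ a then 1 else 0) := by
      split <;> split <;> omega
    omega

lemma hh_one (l : List ℕ) (hpos : ∀ x ∈ l, 0 < x) : hh l 1 = l.length := by
  induction l with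
  | nil => simp [hh]
  | cons a t ih =>
    rw [hh_cons]
    have ha : 0 < a := hpos a (by simp)
    rw [if_pos (by omega)]
    rw [ih (fun x hx => hpos x (by simp [hx]))]
    simp
    omega

lemma hh_zero_of_sorted (l : List ℕ) (hs : l.Pairwise (· ≥ ·)) (c : ℕ)
    (hc : l.headD 0 < c) : hh l c = 0 := by
  cases l with
  | nil => simp [hh]
  | cons a t =>
    simp only [List.headD_cons] at hc
    rw [List.pairwise_cons] at hs
    rw [hh_cons, if_neg (by omega),
      hh_eq_zero t c (fun x hx => by have := hs.1 x hx; omega)]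

lemma sorted_hh_iff (l : List ℕ) (hs : l.Pairwise (· ≥ ·)) (c : ℕ) (hc : 1 ≤ c) :
    ∀ i, i < l.length → (c ≤ l.getD i 0 ↔ i < hh l c) := by
  induction l with
  | nil => simp
  | cons a t ih =>
    rw [List.pairwise_cons] at hs
    intro i hi
    rw [hh_cons]
    cases i with
    | zero =>
      simp only [List.getD_cons_zero]
      constructor
      · intro h; rw [if_pos h]; omega
      · intro h
        by_contra hna
        rw [if_neg hna] at h
        have : hh t c = 0 :=
          hh_eq_zero t c (fun x hx => by have := hs.1 x hx; omega)
        omega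
    | succ i =>
      simp only [List.getD_cons_succ]
      simp only [List.length_cons] at hi
      have hit : i < t.length := by omega
      rw [ih hs.2 i hit]
      by_cases hca : c ≤ a
      · rw [if_pos hca]; omega
      · rw [if_neg hca]
        have h0 : hh t c = 0 :=
          hh_eq_zero t c (fun x hx => by have := hs.1 x hx; omega)
        omega


def cellChi (l : List ℕ) (i j : ℕ) : ℕ :=
  if i < hh l (j+1) ∧ (l.getD i 0 + i = hh l (j+1) + j ∨ l.getD i 0 + i = hh l (j+1) + j + 1)
  then 1 else 0

def W (l : List ℕ) : ℕ :=
  ∑ i ∈ Finset.range l.length, ∑ j ∈ Finset.range (l.headD 0), cellChi l i j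

lemma leg_card (l : List ℕ) (hs : l.Pairwise (· ≥ ·)) (i : Fin l.length) (j : ℕ) :
    (Finset.univ.filter (fun i' : Fin l.length =>
      (i : ℕ) < (i' : ℕ) ∧ j < l.get i')).card = hh l (j+1) - ((i : ℕ)+1) := by
  have h1 : (Finset.univ.filter (fun i' : Fin l.length =>
      (i : ℕ) < (i' : ℕ) ∧ j < l.get i')) = (Finset.univ.filter (fun i' : Fin l.length =>
      (i : ℕ) < (i' : ℕ) ∧ (i' : ℕ) < hh l (j+1))) := by
    apply Finset.filter_congr
    intro i' _
    have hiff := sorted_hh_iff l hs (j+1) (by omega) (i' : ℕ) i'.isLt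
    rw [List.getD_eq_getElem l 0 i'.isLt] at hiff
    simp only [List.get_eq_getElem]
    constructor
    · rintro ⟨h, h2⟩; exact ⟨h, hiff.mp (by omega)⟩
    · rintro ⟨h, h2⟩; have := hiff.mpr h2; exact ⟨h, by omega⟩
  rw [h1, Finset.card_filter,
    Fin.sum_univ_eq_sum_range (fun x => if (i : ℕ) < x ∧ x < hh l (j+1) then 1 else 0),
    ← Finset.card_filter]
  have h2 : (Finset.range l.length).filter (fun x => (i : ℕ) < x ∧ x < hh l (j+1))
      = Finset.Ioo (i : ℕ) (hh l (j+1)) := by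
    ext x
    simp only [Finset.mem_filter, Finset.mem_range, Finset.mem_Ioo]
    have := hh_le l (j+1)
    omega
  rw [h2, Nat.card_Ioo]
  omega

lemma pdinv_eq_W (l : List ℕ) (hs : l.Pairwise (· ≥ ·)) : pdinv l = W l := by
  rw [pdinv, Finset.card_filter, Fintype.sum_prod_type]
  have step1 : ∀ x : Fin l.length, ∀ y : Fin (l.headD 0),
      (if ((y:ℕ) < l.get x ∧
          (l.get x - 1 - (y:ℕ) =
            (Finset.univ.filter (fun i' : Fin l.length =>
              (x : ℕ) < (i' : ℕ) ∧ (y:ℕ) < l.get i')).card ∨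
          l.get x - 1 - (y:ℕ) =
            (Finset.univ.filter (fun i' : Fin l.length =>
              (x : ℕ) < (i' : ℕ) ∧ (y:ℕ) < l.get i')).card + 1)) then 1 else 0)
        = cellChi l (x:ℕ) (y:ℕ) := by
    intro x y
    rw [leg_card l hs x (y:ℕ)]
    have hiff := sorted_hh_iff l hs ((y:ℕ)+1) (by omega) (x:ℕ) x.isLt
    rw [List.getD_eq_getElem l 0 x.isLt] at hiff
    unfold cellChi
    rw [List.getD_eq_getElem l 0 x.isLt]
    simp only [List.get_eq_getElem]
    by_cases hc : (x:ℕ) < hh l ((y:ℕ)+1)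
    · have hy : (y:ℕ)+1 ≤ l[(x:ℕ)] := hiff.mpr hc
      split_ifs <;> omega
    · have hy : ¬((y:ℕ)+1 ≤ l[(x:ℕ)]) := fun h => hc (hiff.mp h)
      split_ifs <;> omega
  calc (∑ x : Fin l.length, ∑ y : Fin (l.headD 0),
        if ((y:ℕ) < l.get x ∧
          (l.get x - 1 - (y:ℕ) =
            (Finset.univ.filter (fun i' : Fin l.length =>
              (x : ℕ) < (i' : ℕ) ∧ (y:ℕ) < l.get i')).card ∨
          l.get x - 1 - (y:ℕ) =
            (Finset.univ.filter (fun i' : Fin l.length =>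
              (x : ℕ) < (i' : ℕ) ∧ (y:ℕ) < l.get i')).card + 1)) then 1 else 0)
      = ∑ x : Fin l.length, ∑ y : Fin (l.headD 0), cellChi l (x:ℕ) (y:ℕ) := by
        exact Finset.sum_congr rfl (fun x _ => Finset.sum_congr rfl (fun y _ => step1 x y))
    _ = W l := by
        rw [W, ← Fin.sum_univ_eq_sum_range
          (fun i => ∑ j ∈ Finset.range (l.headD 0), cellChi l i j)]
        exact Finset.sum_congr rfl (fun x _ =>
          Fin.sum_univ_eq_sum_range (fun j => cellChi l (x:ℕ) j) (l.headD 0))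


-- elements bounded by head
lemma le_headD (l : List ℕ) (hs : l.Pairwise (· ≥ ·)) : ∀ x ∈ l, x ≤ l.headD 0 := by
  cases l with
  | nil => simp
  | cons a t =>
    rw [List.pairwise_cons] at hs
    intro x hx
    rcases List.mem_cons.mp hx with h | h
    · simp [h]
    · simpa using hs.1 x h

-- hh of the tail list
lemma hh_tail (g : List ℕ) (c : ℕ) (hc : 1 ≤ c) :
    hh ((g.map (· - 1)).filter (fun x => 0 < x)) c = hh g (c+1) := by
  induction g with
  | nil => simp [hh]
  | cons a r ih =>
    simp only [List.map_cons, List.filter_cons]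
    by_cases ha : 0 < a - 1
    · rw [if_pos (by simpa using ha), hh_cons, hh_cons, ih]
      have : (if c ≤ a - 1 then 1 else 0) = (if c + 1 ≤ a then 1 else 0) := by
        split <;> split <;> omega
      omega
    · rw [if_neg (by simpa using ha), hh_cons, ih, if_neg (by omega)]; omega

-- positivity of the tail list
lemma tail_pos (g : List ℕ) : ∀ x ∈ (g.map (· - 1)).filter (fun x => 0 < x), 0 < x := by
  intro x hx
  have := List.of_mem_filter hx
  simpa using this

-- tail length
lemma tail_len (g : List ℕ) : ((g.map (· - 1)).filter (fun x => 0 < x)).length = hh g 2 := by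
  rw [← hh_one _ (tail_pos g), hh_tail g 1 le_rfl]

-- tail sorted
lemma tail_sorted (g : List ℕ) (hs : g.Pairwise (· ≥ ·)) :
    ((g.map (· - 1)).filter (fun x => 0 < x)).Pairwise (· ≥ ·) := by
  apply List.Pairwise.filter
  exact List.Pairwise.map _ (fun {a b} h => Nat.sub_le_sub_right h 1) hs

-- tail getD
lemma tail_getD (g : List ℕ) (hs : g.Pairwise (· ≥ ·)) :
    ∀ i, i < hh g 2 → ((g.map (· - 1)).filter (fun x => 0 < x)).getD i 0 = g.getD i 0 - 1 := by
  induction g with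
  | nil => simp [hh]
  | cons a r ih =>
    rw [List.pairwise_cons] at hs
    intro i hi
    by_cases ha : 2 ≤ a
    · simp only [List.map_cons, List.filter_cons, if_pos (by simp; omega : (decide (0 < a - 1)) = true)]
      cases i with
      | zero => simp
      | succ i =>
        simp only [List.getD_cons_succ]
        apply ih hs.2
        rw [hh_cons, if_pos ha] at hi
        omega
    · exfalso
      have : hh (a :: r) 2 = 0 :=
        hh_eq_zero _ 2 (by
          intro x hx
          rcases List.mem_cons.mp hx with h | h
          · omega
          · have := hs.1 x h; omega)
      omega

-- getD entries are >= 2 for i < hh g 2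
lemma getD_ge_two (g : List ℕ) (hs : g.Pairwise (· ≥ ·)) (i : ℕ) (hi : i < hh g 2) :
    2 ≤ g.getD i 0 := by
  have hle := hh_le g 2
  exact (sorted_hh_iff g hs 2 (by omega) i (by omega)).mpr hi


def Qf (g : List ℕ) (d : ℕ) : ℕ := if g.length + 1 ≤ hh g d + d then 1 else 0
def Rf (g : List ℕ) (d : ℕ) : ℕ := if g.length + 3 ≤ hh g d + d then 1 else 0
def chi1 (g : List ℕ) (i : ℕ) : ℕ :=
  if g.getD i 0 + i = g.length ∨ g.getD i 0 + i = g.length + 1 then 1 else 0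
def chi2 (g : List ℕ) (j : ℕ) : ℕ :=
  if hh g (j+2) + j = g.length ∨ hh g (j+2) + j + 1 = g.length then 1 else 0

section main
variable (g : List ℕ)

lemma nuOne_length : (nuOne g).length = hh g 2 + 1 := by
  simp [nuOne, tail_len]

lemma nuOne_headD : (nuOne g).headD 0 = g.length + 1 := rfl

lemma nuOne_sorted (hs : g.Pairwise (· ≥ ·)) (hD : g.headD 0 ≤ g.length + 2) :
    (nuOne g).Pairwise (· ≥ ·) := by
  rw [nuOne, List.pairwise_cons]
  refine ⟨?_, tail_sorted g hs⟩
  intro b hb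
  have h1 := tail_pos g b hb
  have h2 : b ∈ g.map (· - 1) := List.mem_of_mem_filter hb
  obtain ⟨x, hx, hxb⟩ := List.mem_map.mp h2
  have := le_headD g hs x hx
  omega

lemma nuOne_pos : ∀ x ∈ nuOne g, 0 < x := by
  intro x hx
  rcases List.mem_cons.mp hx with h | h
  · omega
  · exact tail_pos g x h

lemma hh_nuOne (c : ℕ) (hc1 : 1 ≤ c) (hc2 : c ≤ g.length + 1) :
    hh (nuOne g) c = 1 + hh g (c+1) := by
  rw [nuOne, hh_cons, if_pos hc2, hh_tail g c hc1]

lemma getD_nuOne_succ (hs : g.Pairwise (· ≥ ·)) (i : ℕ) (hi : i < hh g 2) :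
    (nuOne g).getD (i+1) 0 = g.getD i 0 - 1 := by
  rw [nuOne, List.getD_cons_succ]
  exact tail_getD g hs i hi

-- key per-cell identity between rows ≥ 1 of nuOne g and columns ≥ 1 of g
lemma key_cell (hs : g.Pairwise (· ≥ ·)) (i j : ℕ) (hi : i < hh g 2) (hj : j < g.length + 1) :
    cellChi (nuOne g) (i+1) j = cellChi g i (j+1) := by
  unfold cellChi
  rw [hh_nuOne g (j+1) (by omega) (by omega), getD_nuOne_succ g hs i hi,
    show j+1+1 = j+2 from rfl]
  have h2 := getD_ge_two g hs i hi
  apply if_congr _ rfl rfl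
  constructor
  · rintro ⟨h1, h3⟩
    exact ⟨by omega, by omega⟩
  · rintro ⟨h1, h3⟩
    exact ⟨by omega, by omega⟩

lemma row0_cell (j : ℕ) (hj : j < g.length + 1) :
    cellChi (nuOne g) 0 j = chi2 g j := by
  unfold cellChi chi2
  rw [hh_nuOne g (j+1) (by omega) (by omega), show j+1+1 = j+2 from rfl,
    show (nuOne g).getD 0 0 = g.length + 1 from rfl]
  apply if_congr _ rfl rfl
  constructor
  · rintro ⟨h1, h3⟩; omega
  · intro h; exact ⟨by omega, by omega⟩

lemma col0_cell (hpos : ∀ x ∈ g, 0 < x) (i : ℕ) (hi : i < g.length) :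
    cellChi g i 0 = chi1 g i := by
  unfold cellChi chi1
  rw [show (0:ℕ)+1 = 1 from rfl, hh_one g hpos]
  apply if_congr _ rfl rfl
  constructor
  · rintro ⟨h1, h3⟩; omega
  · intro h; exact ⟨hi, by omega⟩

lemma tele1 (hs : g.Pairwise (· ≥ ·)) (i : ℕ) (hi : i < g.length) :
    chi1 g i + Rf g (g.length + 2 - i) = Qf g (g.length - i) := by
  have hQ := sorted_hh_iff g hs (g.length - i) (by omega) i hi
  have hR := sorted_hh_iff g hs (g.length + 2 - i) (by omega) i hi
  have hQl := hh_le g (g.length - i)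
  have hRl := hh_le g (g.length + 2 - i)
  unfold chi1 Rf Qf
  by_cases hc1 : i < hh g (g.length - i)
  · have h1 : g.length - i ≤ g.getD i 0 := hQ.mpr hc1
    by_cases hc2 : i < hh g (g.length + 2 - i)
    · have h2 : g.length + 2 - i ≤ g.getD i 0 := hR.mpr hc2
      split_ifs <;> omega
    · have h2 : ¬ (g.length + 2 - i ≤ g.getD i 0) := fun h => hc2 (hR.mp h)
      split_ifs <;> omega
  · have h1 : ¬ (g.length - i ≤ g.getD i 0) := fun h => hc1 (hQ.mp h)
    have h2 : ¬ (g.length + 2 - i ≤ g.getD i 0) := fun h =>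
      hc1 (by have := hR.mp h; have := hh_anti g (show g.length - i ≤ g.length + 2 - i by omega); omega)
    split_ifs <;> omega

lemma tele2 (j : ℕ) : chi2 g j + Rf g (j + 2) = Qf g (j + 2) := by
  unfold chi2 Rf Qf
  split_ifs <;> omega


lemma Rf_two_eq_zero : Rf g 2 = 0 := by
  have := hh_le g 2
  unfold Rf
  rw [if_neg (by omega)]

lemma S2_eq_S1 (hs : g.Pairwise (· ≥ ·)) (hpos : ∀ x ∈ g, 0 < x) :
    ∑ j ∈ Finset.range (g.length+1), chi2 g j
      = (∑ i ∈ Finset.range g.length, chi1 g i) + 1 := by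
  set L := g.length with hLdef
  have e1 : (∑ i ∈ Finset.range L, chi1 g i) + (∑ i ∈ Finset.range L, Rf g (i+3))
      = ∑ i ∈ Finset.range L, Qf g (i+1) := by
    have h1 : ∑ i ∈ Finset.range L, (chi1 g i + Rf g (L + 2 - i))
        = ∑ i ∈ Finset.range L, Qf g (L - i) :=
      Finset.sum_congr rfl (fun i hi => tele1 g hs i (Finset.mem_range.mp hi))
    rw [Finset.sum_add_distrib] at h1
    have h2 : ∑ i ∈ Finset.range L, Rf g (L + 2 - i) = ∑ i ∈ Finset.range L, Rf g (i+3) := by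
      rw [← Finset.sum_range_reflect (fun i => Rf g (i+3)) L]
      exact Finset.sum_congr rfl (fun i hi => by
        have := Finset.mem_range.mp hi
        congr 1
        omega)
    have h3 : ∑ i ∈ Finset.range L, Qf g (L - i) = ∑ i ∈ Finset.range L, Qf g (i+1) := by
      rw [← Finset.sum_range_reflect (fun i => Qf g (i+1)) L]
      exact Finset.sum_congr rfl (fun i hi => by
        have := Finset.mem_range.mp hi
        congr 1
        omega)
    omega
  have e2 : (∑ j ∈ Finset.range (L+1), chi2 g j) + (∑ i ∈ Finset.range L, Rf g (i+3))
      = ∑ j ∈ Finset.range (L+1), Qf g (j+2) := by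
    have h1 : ∑ j ∈ Finset.range (L+1), (chi2 g j + Rf g (j+2))
        = ∑ j ∈ Finset.range (L+1), Qf g (j+2) :=
      Finset.sum_congr rfl (fun j _ => tele2 g j)
    rw [Finset.sum_add_distrib] at h1
    have h2 : ∑ j ∈ Finset.range (L+1), Rf g (j+2) = ∑ i ∈ Finset.range L, Rf g (i+3) := by
      rw [Finset.sum_range_succ' (fun j => Rf g (j+2)) L, Rf_two_eq_zero, add_zero]
    omega
  have e3 : (∑ j ∈ Finset.range (L+1), Qf g (j+2)) + Qf g 1
      = (∑ i ∈ Finset.range L, Qf g (i+1)) + Qf g (L+1) + Qf g (L+2) := by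
    have h1 := Finset.sum_range_succ' (fun j => Qf g (j+1)) (L+1)
    have h2 := Finset.sum_range_succ (fun j => Qf g (j+1)) (L+1)
    have h3 := Finset.sum_range_succ (fun j => Qf g (j+1)) L
    have hx : ∑ j ∈ Finset.range (L+1), Qf g (j+1+1) = ∑ j ∈ Finset.range (L+1), Qf g (j+2) := rfl
    have hy : Qf g (0+1) = Qf g 1 := rfl
    have hz : Qf g (L+1+1) = Qf g (L+2) := rfl
    omega
  have hq1 : Qf g 1 = 1 := by
    unfold Qf
    rw [hh_one g hpos, if_pos (by omega)]
  have hqL1 : Qf g (L+1) = 1 := by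
    unfold Qf
    rw [if_pos (by omega)]
  have hqL2 : Qf g (L+2) = 1 := by
    unfold Qf
    rw [if_pos (by omega)]
  omega

lemma W_nuOne (hs : g.Pairwise (· ≥ ·)) (hpos : ∀ x ∈ g, 0 < x)
    (hD : g.headD 0 ≤ g.length + 2) (hL : 1 ≤ g.length) :
    W (nuOne g) = W g + 1 := by
  have hk : hh g 2 ≤ g.length := hh_le g 2
  have hWG : W (nuOne g) = (∑ j ∈ Finset.range (g.length+1), chi2 g j)
      + ∑ i ∈ Finset.range (hh g 2), ∑ j ∈ Finset.range (g.length+1), cellChi g i (j+1) := by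
    rw [W, nuOne_length, nuOne_headD,
      Finset.sum_range_succ' (fun i => ∑ j ∈ Finset.range (g.length+1), cellChi (nuOne g) i j)
        (hh g 2)]
    rw [add_comm]
    congr 1
    · exact Finset.sum_congr rfl (fun j hj => row0_cell g j (Finset.mem_range.mp hj))
    · exact Finset.sum_congr rfl (fun i hi => Finset.sum_congr rfl (fun j hj =>
        key_cell g hs i j (Finset.mem_range.mp hi) (Finset.mem_range.mp hj)))
  have hext : ∑ i ∈ Finset.range (hh g 2), ∑ j ∈ Finset.range (g.length+1), cellChi g i (j+1)
      = ∑ i ∈ Finset.range g.length, ∑ j ∈ Finset.range (g.length+1), cellChi g i (j+1) := by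
    apply Finset.sum_subset (Finset.range_subset_range.mpr hk)
    intro i hi1 hi2
    rw [Finset.mem_range] at hi1 hi2
    apply Finset.sum_eq_zero
    intro j _
    unfold cellChi
    rw [if_neg]
    rintro ⟨h1, _⟩
    have := hh_anti g (show 2 ≤ j+1+1 by omega)
    omega
  have hWg : W g = (∑ i ∈ Finset.range g.length, chi1 g i)
      + ∑ i ∈ Finset.range g.length, ∑ j ∈ Finset.range (g.length+1), cellChi g i (j+1) := by
    rw [W, ← Finset.sum_add_distrib]
    apply Finset.sum_congr rfl
    intro i hi
    have hi' := Finset.mem_range.mp hi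
    have hg0 : 1 ≤ g.headD 0 := by
      cases g with
      | nil => simp at hL
      | cons a r => exact hpos a (by simp)
    obtain ⟨m, hm⟩ : ∃ m, g.headD 0 = m + 1 := ⟨g.headD 0 - 1, by omega⟩
    rw [hm, Finset.sum_range_succ' (fun j => cellChi g i j) m, col0_cell g hpos i hi']
    have hsub : ∑ j ∈ Finset.range m, cellChi g i (j+1)
        = ∑ j ∈ Finset.range (g.length+1), cellChi g i (j+1) := by
      apply Finset.sum_subset (Finset.range_subset_range.mpr (by omega))
      intro j hj1 hj2
      rw [Finset.mem_range] at hj1 hj2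
      unfold cellChi
      rw [if_neg]
      rintro ⟨h1, _⟩
      have h0 : hh g (j+1+1) = 0 := hh_zero_of_sorted g hs _ (by omega)
      omega
    omega
  rw [hWG, hext, hWg, S2_eq_S1 g hs hpos]
  omega

end main



lemma tail_sum (g : List ℕ) (hpos : ∀ x ∈ g, 0 < x) :
    ((g.map (· - 1)).filter (fun x => 0 < x)).sum + g.length = g.sum := by
  induction g with
  | nil => simp
  | cons a r ih =>
    have ha := hpos a (by simp)
    have ih' := ih (fun x hx => hpos x (by simp [hx]))
    simp only [List.map_cons, List.filter_cons, List.sum_cons, List.length_cons]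
    by_cases h : 0 < a - 1
    · rw [if_pos (by simpa using h)]
      simp only [List.sum_cons]
      omega
    · rw [if_neg (by simpa using h)]
      omega


theorem stmt9 (g : List ℕ) (hg : IsPartitionList g) (hD : g.headD 0 ≤ g.length + 2) :
    (nuOne g).sum = g.sum + 1 ∧
    pdinv (nuOne g) = pdinv g + 1 ∧
    ((nuOne g).sum : ℤ) - (pdinv (nuOne g) : ℤ) = (g.sum : ℤ) - (pdinv g : ℤ) := by
  obtain ⟨hs, hpos⟩ := hg
  have hsum : (nuOne g).sum = g.sum + 1 := by
    have := tail_sum g hpos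
    simp only [nuOne, List.sum_cons]
    omega
  have hpd : pdinv (nuOne g) = pdinv g + 1 := by
    cases g with
    | nil => decide
    | cons a r =>
      rw [pdinv_eq_W _ (nuOne_sorted _ hs hD), pdinv_eq_W _ hs,
        W_nuOne _ hs hpos hD (by simp)]
  refine ⟨hsum, hpd, by rw [hsum, hpd]; push_cast; ring⟩
end
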